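/- arXiv:1505.04465 — 8 statements merged into one kernel-verified Lean document; each statement's English description precedes it below -/
import Mathlib

section
/- Let Γ be a group and P a real vector space with a linear Γ-action (a Γ-module). Suppose P has a basis S such that: (i) for every s ∈ S and γ ∈ Γ there exists t ∈ S with γ·s = t or γ·s = −t, and (ii) for every s ∈ S the stabilizer {γ ∈ Γ : γ·s = s} is finite. Then P is Γ-projective: for all real vector spaces V and W equipped with linear Γ-actions, every surjective Γ-equivariant linear map φ : V → W, and every Γ-equivariant linear map f : P → W, there exists a Γ-equivariant linear map f̃ : P → V with φ ∘ f̃ = f. -/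
lemma sgn_mul' {e e' : ℝ} (he : e = 1 ∨ e = -1) (he' : e' = 1 ∨ e' = -1) :
    e * e' = 1 ∨ e * e' = -1 := by
  rcases he with rfl|rfl <;> rcases he' with rfl|rfl <;> norm_num

lemma sgn_sq' {e : ℝ} (he : e = 1 ∨ e = -1) : e * e = 1 := by
  rcases he with rfl|rfl <;> norm_num

lemma smul_cancel' {P : Type} [AddCommGroup P] [Module ℝ P] {x : P} (hx : x ≠ 0)
    {e e' : ℝ} (h : e • x = e' • x) : e = e' := by
  have h2 : (e - e') • x = 0 := by rw [sub_smul, h, sub_self]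
  rcases smul_eq_zero.mp h2 with h3 | h3
  · linarith [sub_eq_zero.mp h3]
  · exact absurd h3 hx

/-- Lemma 52 of Mineyev–Yaman, projectivity形:
If a `Γ`-module `P` (a real vector space with a linear `Γ`-action) has a basis `S` such that
`Γ` maps each basis vector to `±` a basis vector and each basis vector has finite stabilizer,
then `P` is `Γ`-projective. -/
theorem gamma_projective_of_signed_basis_finite_stabilizers
    {Γ : Type} [Group Γ] {P : Type} [AddCommGroup P] [Module ℝ P]
    [DistribMulAction Γ P] [SMulCommClass Γ ℝ P]
    {S : Type} (b : Module.Basis S ℝ P)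
    (hsign : ∀ (γ : Γ) (s : S), ∃ t : S, γ • b s = b t ∨ γ • b s = - b t)
    (hstab : ∀ s : S, {γ : Γ | γ • b s = b s}.Finite) :
    ∀ (V W : Type) [AddCommGroup V] [Module ℝ V] [DistribMulAction Γ V] [SMulCommClass Γ ℝ V]
      [AddCommGroup W] [Module ℝ W] [DistribMulAction Γ W] [SMulCommClass Γ ℝ W]
      (φ : V →ₗ[ℝ] W), Function.Surjective φ →
      (∀ (γ : Γ) (v : V), φ (γ • v) = γ • φ v) →
      ∀ f : P →ₗ[ℝ] W, (∀ (γ : Γ) (p : P), f (γ • p) = γ • f p) →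
      ∃ ft : P →ₗ[ℝ] V, (∀ (γ : Γ) (p : P), ft (γ • p) = γ • ft p) ∧ φ ∘ₗ ft = f := by
  classical
  intro V W _ _ _ _ _ _ _ _ φ hsurj hφ f hf
  -- signed version of hsign
  have hsign' : ∀ (γ : Γ) (s : S), ∃ t : S, ∃ e : ℝ,
      (e = 1 ∨ e = -1) ∧ γ • b s = e • b t := by
    intro γ s
    obtain ⟨t, ht | ht⟩ := hsign γ s
    · exact ⟨t, 1, Or.inl rfl, by simpa using ht⟩
    · exact ⟨t, -1, Or.inr rfl, by simpa using ht⟩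
  -- the relation
  set r : S → S → Prop := fun s t => ∃ γ : Γ, ∃ e : ℝ, (e = 1 ∨ e = -1) ∧ γ • b s = e • b t
    with hr
  have r_refl : ∀ s, r s s := fun s => ⟨1, 1, Or.inl rfl, by simp⟩
  have r_symm : ∀ {s t}, r s t → r t s := by
    rintro s t ⟨γ, e, he, h⟩
    refine ⟨γ⁻¹, e, he, ?_⟩
    have : γ⁻¹ • (γ • b s) = γ⁻¹ • (e • b t) := by rw [h]
    rw [inv_smul_smul, smul_comm] at this
    calc γ⁻¹ • b t = (e * e) • (γ⁻¹ • b t) := by rw [sgn_sq' he, one_smul]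
    _ = e • (e • (γ⁻¹ • b t)) := by rw [mul_smul]
    _ = e • b s := by rw [← this]
  have r_trans : ∀ {s t u}, r s t → r t u → r s u := by
    rintro s t u ⟨γ₁, e₁, he₁, h₁⟩ ⟨γ₂, e₂, he₂, h₂⟩
    refine ⟨γ₂ * γ₁, e₂ * e₁, sgn_mul' he₂ he₁, ?_⟩
    rw [mul_smul, h₁, smul_comm, h₂, ← mul_smul, mul_comm e₁ e₂]
  letI sd : Setoid S := ⟨r, ⟨r_refl, r_symm, r_trans⟩⟩
  set rep : S → S := fun s => (Quotient.mk sd s).out with hrepdef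
  have hrep : ∀ s, r (rep s) s := fun s => Quotient.mk_out (s := sd) s
  have hrep_eq : ∀ {s t}, r s t → rep s = rep t := by
    intro s t hst
    simp only [hrepdef]
    rw [Quotient.sound (a := s) (b := t) hst]
  -- choices for connecting rep s to s
  choose γc ec hec hγc using hrep
  -- signed stabilizer
  set H : S → Set Γ := fun s0 => {γ | ∃ e : ℝ, (e = 1 ∨ e = -1) ∧ γ • b s0 = e • b s0}
    with hH
  have hbne : ∀ s : S, b s ≠ 0 := fun s => b.ne_zero s
  -- sign character
  set E : S → Γ → ℝ := fun s0 γ => if γ • b s0 = b s0 then 1 else -1 with hE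
  have hEsgn : ∀ s0 γ, E s0 γ = 1 ∨ E s0 γ = -1 := by
    intro s0 γ; by_cases h : γ • b s0 = b s0 <;> simp [hE, h]
  have hEvalue : ∀ s0, ∀ γ ∈ H s0, γ • b s0 = E s0 γ • b s0 := by
    rintro s0 γ ⟨e, he, hγ⟩
    rcases he with rfl | rfl
    · rw [one_smul] at hγ; simp [hE, hγ]
    · have hne : γ • b s0 ≠ b s0 := by
        rw [hγ]
        intro hcontra
        have : (-1 : ℝ) = 1 := smul_cancel' (hbne s0) (by simpa using hcontra)
        norm_num at this
      show γ • b s0 = (if γ • b s0 = b s0 then (1:ℝ) else -1) • b s0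
      rw [if_neg hne]
      simpa using hγ
  have hEdet : ∀ s0 γ (e : ℝ), (e = 1 ∨ e = -1) → γ • b s0 = e • b s0 → E s0 γ = e := by
    intro s0 γ e he h
    have hmem : γ ∈ H s0 := ⟨e, he, h⟩
    exact smul_cancel' (hbne s0) ((hEvalue s0 γ hmem).symm.trans h)
  -- H is a "subgroup": closure facts
  have hone : ∀ s0, (1 : Γ) ∈ H s0 := fun s0 => ⟨1, Or.inl rfl, by simp⟩
  have hmul : ∀ s0, ∀ g ∈ H s0, ∀ h ∈ H s0, g * h ∈ H s0 ∧ E s0 (g * h) = E s0 g * E s0 h := by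
    intro s0 g hg h hh
    have : (g * h) • b s0 = (E s0 g * E s0 h) • b s0 := by
      rw [mul_smul, hEvalue s0 h hh, smul_comm, hEvalue s0 g hg, ← mul_smul,
        mul_comm (E s0 h) (E s0 g)]
    have hsgn := sgn_mul' (hEsgn s0 g) (hEsgn s0 h)
    exact ⟨⟨_, hsgn, this⟩, hEdet s0 _ _ hsgn this⟩
  have hinv : ∀ s0, ∀ g ∈ H s0, g⁻¹ ∈ H s0 ∧ E s0 g⁻¹ = E s0 g := by
    intro s0 g hg
    have h1 : g⁻¹ • b s0 = E s0 g • b s0 := by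
      have : g⁻¹ • (g • b s0) = g⁻¹ • (E s0 g • b s0) := by rw [hEvalue s0 g hg]
      rw [inv_smul_smul, smul_comm] at this
      calc g⁻¹ • b s0 = (E s0 g * E s0 g) • (g⁻¹ • b s0) := by
            rw [sgn_sq' (hEsgn s0 g), one_smul]
        _ = E s0 g • (E s0 g • (g⁻¹ • b s0)) := by rw [mul_smul]
        _ = E s0 g • b s0 := by rw [← this]
    exact ⟨⟨_, hEsgn s0 g, h1⟩, hEdet s0 _ _ (hEsgn s0 g) h1⟩
  -- H finite
  have hHfin : ∀ s0, (H s0).Finite := by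
    intro s0
    have hsub : H s0 ⊆ {γ | γ • b s0 = b s0} ∪ {γ | γ • b s0 = -b s0} := by
      rintro γ ⟨e, he, h⟩
      rcases he with rfl | rfl
      · left; simpa using h
      · right; simpa using h
    refine Set.Finite.subset (Set.Finite.union (hstab s0) ?_) hsub
    by_cases hne : {γ : Γ | γ • b s0 = -b s0}.Nonempty
    · obtain ⟨g, hg⟩ := hne
      have : {γ : Γ | γ • b s0 = -b s0} ⊆ (fun γ => g * γ) '' {γ | γ • b s0 = b s0} := by
        intro γ hγ
        refine ⟨g⁻¹ * γ, ?_, by group⟩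
        have hginv : g⁻¹ • b s0 = -b s0 := by
          have h1 : g⁻¹ • (g • b s0) = g⁻¹ • (-b s0) := by rw [hg]
          rw [inv_smul_smul, smul_neg] at h1
          have h2 := congrArg (fun x : P => -x) h1.symm
          simpa using h2
        show (g⁻¹ * γ) • b s0 = b s0
        rw [mul_smul, (by exact hγ : γ • b s0 = -b s0), smul_neg, hginv, neg_neg]
      exact Set.Finite.subset (Set.Finite.image _ (hstab s0)) this
    · rw [Set.not_nonempty_iff_eq_empty] at hne
      rw [hne]; exact Set.finite_empty
  -- lifts of f(b s0)
  choose vc hvc using fun s0 : S => hsurj (f (b s0))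
  -- averaged lifts
  set T : S → Finset Γ := fun s0 => (hHfin s0).toFinset with hT
  have hTmem : ∀ s0 γ, γ ∈ T s0 ↔ γ ∈ H s0 := by
    intro s0 γ; simp [hT]
  have hTcard : ∀ s0, (0 : ℝ) < (T s0).card := by
    intro s0
    have : (T s0).Nonempty := ⟨1, (hTmem s0 1).mpr (hone s0)⟩
    exact_mod_cast Finset.card_pos.mpr this
  set u : S → V := fun s0 =>
    (((T s0).card : ℝ))⁻¹ • ∑ h ∈ T s0, E s0 h • (h • vc s0) with hu
  -- (A): φ (u s0) = f (b s0)
  have hA : ∀ s0, φ (u s0) = f (b s0) := by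
    intro s0
    have hterm : ∀ h ∈ T s0, φ (E s0 h • (h • vc s0)) = f (b s0) := by
      intro h hh
      have hh' := (hTmem s0 h).mp hh
      rw [map_smul, hφ, hvc, ← hf, hEvalue s0 h hh', map_smul, ← mul_smul,
        sgn_sq' (hEsgn s0 h), one_smul]
    show φ ((((T s0).card : ℝ))⁻¹ • ∑ h ∈ T s0, E s0 h • (h • vc s0)) = f (b s0)
    rw [map_smul, map_sum, Finset.sum_congr rfl hterm, Finset.sum_const,
      ← Nat.cast_smul_eq_nsmul ℝ, ← mul_smul,
      inv_mul_cancel₀ (ne_of_gt (hTcard s0)), one_smul]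
  -- (B): g • u s0 = E s0 g • u s0 for g ∈ H s0
  have hB : ∀ s0, ∀ g ∈ H s0, g • u s0 = E s0 g • u s0 := by
    intro s0 g hg
    have key : g • (∑ h ∈ T s0, E s0 h • (h • vc s0))
        = E s0 g • ∑ h ∈ T s0, E s0 h • (h • vc s0) := by
      rw [Finset.smul_sum, Finset.smul_sum]
      refine Finset.sum_nbij' (i := fun h => g * h) (j := fun k => g⁻¹ * k) ?_ ?_ ?_ ?_ ?_
      · intro h hh
        exact (hTmem s0 _).mpr (hmul s0 g hg h ((hTmem s0 h).mp hh)).1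
      · intro k hk
        exact (hTmem s0 _).mpr (hmul s0 g⁻¹ (hinv s0 g hg).1 k ((hTmem s0 k).mp hk)).1
      · intro h _; group
      · intro k _; group
      · intro h hh
        have hh' := (hTmem s0 h).mp hh
        rw [smul_comm g, (hmul s0 g hg h hh').2, mul_smul g h,
          ← mul_smul (E s0 g), ← mul_assoc, sgn_sq' (hEsgn s0 g), one_mul]
    show g • ((((T s0).card : ℝ))⁻¹ • ∑ h ∈ T s0, E s0 h • (h • vc s0))
        = E s0 g • ((((T s0).card : ℝ))⁻¹ • ∑ h ∈ T s0, E s0 h • (h • vc s0))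
    rw [smul_comm, key, smul_comm]
  -- the key well-definedness lemma
  have hKey : ∀ s0 s (γ₁ γ₂ : Γ) (e₁ e₂ : ℝ), (e₁ = 1 ∨ e₁ = -1) → (e₂ = 1 ∨ e₂ = -1) →
      γ₁ • b s0 = e₁ • b s → γ₂ • b s0 = e₂ • b s →
      e₁ • (γ₁ • u s0) = e₂ • (γ₂ • u s0) := by
    intro s0 s γ₁ γ₂ e₁ e₂ he₁ he₂ h₁ h₂
    have hstep : (γ₂⁻¹ * γ₁) • b s0 = (e₁ * e₂) • b s0 := by
      have hb : γ₂⁻¹ • b s = e₂ • b s0 := by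
        have := congrArg (fun x => γ₂⁻¹ • x) h₂
        simp only [inv_smul_smul, smul_comm γ₂⁻¹ e₂] at this
        calc γ₂⁻¹ • b s = (e₂ * e₂) • (γ₂⁻¹ • b s) := by rw [sgn_sq' he₂, one_smul]
          _ = e₂ • (e₂ • (γ₂⁻¹ • b s)) := by rw [mul_smul]
          _ = e₂ • b s0 := by rw [← this]
      rw [mul_smul, h₁, smul_comm, hb, ← mul_smul]
    have hmem : γ₂⁻¹ * γ₁ ∈ H s0 := ⟨_, sgn_mul' he₁ he₂, hstep⟩
    have hEval : E s0 (γ₂⁻¹ * γ₁) = e₁ * e₂ := hEdet s0 _ _ (sgn_mul' he₁ he₂) hstep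
    have hm := hB s0 _ hmem
    rw [hEval] at hm
    calc e₁ • (γ₁ • u s0)
        = e₁ • (γ₂ • ((γ₂⁻¹ * γ₁) • u s0)) := by rw [← mul_smul, mul_inv_cancel_left]
      _ = e₁ • (γ₂ • ((e₁ * e₂) • u s0)) := by rw [hm]
      _ = e₂ • (γ₂ • u s0) := by
          rw [smul_comm γ₂ (e₁ * e₂), ← mul_smul, ← mul_assoc, sgn_sq' he₁, one_mul]
  -- define the lift on the basis and extend
  set F : S → V := fun s => ec s • (γc s • u (rep s)) with hF
  refine ⟨b.constr ℝ F, ?_, ?_⟩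
  · -- equivariance
    intro γ p
    have hext : (b.constr ℝ F).comp (DistribSMul.toLinearMap ℝ P γ)
        = (DistribSMul.toLinearMap ℝ V γ).comp (b.constr ℝ F) := by
      apply b.ext
      intro s
      simp only [LinearMap.comp_apply, DistribSMul.toLinearMap_apply, Module.Basis.constr_basis]
      obtain ⟨t, e', he', hgs⟩ := hsign' γ s
      have hrst : r s t := ⟨γ, e', he', hgs⟩
      have hreps : rep s = rep t := hrep_eq hrst
      rw [hgs, map_smul, Module.Basis.constr_basis]
      -- goal: e' • F t = γ • F s
      have h₁ : (γ * γc s) • b (rep s) = (ec s * e') • b t := by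
        rw [mul_smul, hγc s, smul_comm, hgs, ← mul_smul]
      have h₂ : γc t • b (rep s) = ec t • b t := by rw [hreps, hγc t]
      have hk := hKey (rep s) t (γ * γc s) (γc t) (ec s * e') (ec t)
        (sgn_mul' (hec s) he') (hec t) h₁ h₂
      show e' • F t = γ • F s
      rw [hF]
      simp only [← hreps]
      calc e' • (ec t • (γc t • u (rep s)))
          = (e' * ec t) • (γc t • u (rep s)) := by rw [mul_smul]
        _ = (e' * (ec s * e')) • ((γ * γc s) • u (rep s)) := by
            rw [mul_smul, mul_smul, hk]
        _ = ec s • ((γ * γc s) • u (rep s)) := by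
            rw [mul_comm (ec s) e', ← mul_assoc, sgn_sq' he', one_mul]
        _ = γ • (ec s • (γc s • u (rep s))) := by
            rw [mul_smul, smul_comm γ (ec s)]
    exact LinearMap.congr_fun hext p
  · -- φ ∘ ft = f
    apply b.ext
    intro s
    simp only [LinearMap.comp_apply, Module.Basis.constr_basis]
    show φ (ec s • (γc s • u (rep s))) = f (b s)
    rw [map_smul, hφ, hA, ← hf, hγc s, map_smul, ← mul_smul, sgn_sq' (hec s), one_smul]
end

section
/- Let Γ be a group, S a type, and let P := (S →₀ ℝ) be the space of finitely supported real functions on S with the ℓ¹ norm. Suppose Γ acts on P by linear maps so that: (i) for every s ∈ S and γ ∈ Γ there exist t ∈ S and ε ∈ {1, −1} with γ·(single s) = ε·(single t), and (ii) for every s ∈ S the set {γ ∈ Γ : γ·(single s) = single s} is finite. Let V and W be normed real vector spaces with linear Γ-actions that are uniformly bounded (there exist constants L_V, L_W such that ‖γ·v‖ ≤ L_V‖v‖ and ‖γ·w‖ ≤ L_W‖w‖ for all γ, v, w). Let φ : V → W be a surjective bounded Γ-equivariant linear map which is undistorted, i.e. there is K > 0 such that every w in the range of φ has a preimage v with φ(v)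 = w and ‖v‖ ≤ K‖w‖, and let f : P → W be a bounded Γ-equivariant linear map. Then there exists a bounded Γ-equivariant linear map f̃ : P → V with φ ∘ f̃ = f. -/
set_option linter.unusedSectionVars false

namespace MY
variable {Γ : Type} [Group Γ] {S : Type}
  [DistribMulAction Γ (S →₀ ℝ)] [SMulCommClass Γ ℝ (S →₀ ℝ)]

/-- indicator -/
noncomputable def e (s : S) : S →₀ ℝ := Finsupp.single s 1

lemma sign_eq {a b : ℝ} (ha : a = 1 ∨ a = -1) {t u : S}
    (h : a • e t = b • e u) : t = u ∧ a = b := by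
  have ha0 : a ≠ 0 := by rcases ha with h | h <;> simp [h]
  have h1 : a * (e t) t = b * (e u) t := by
    simpa [Finsupp.smul_apply] using DFunLike.congr_fun h t
  have het : (e t) t = 1 := by simp [e]
  have htu : t = u := by
    by_contra hne
    have : (e u) t = 0 := by simp [e, Finsupp.single_apply, Ne.symm hne]
    rw [het, this, mul_one, mul_zero] at h1
    exact ha0 h1
  subst htu
  rw [het, mul_one, mul_one] at h1
  exact ⟨rfl, h1⟩

variable (hsign : ∀ (γ : Γ) (s : S), ∃ t : S,
      γ • Finsupp.single s (1 : ℝ) = Finsupp.single t (1 : ℝ) ∨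
      γ • Finsupp.single s (1 : ℝ) = - Finsupp.single t (1 : ℝ))

noncomputable def sig (γ : Γ) (s : S) : S := (hsign γ s).choose

open Classical in
noncomputable def eps (γ : Γ) (s : S) : ℝ :=
  if γ • e s = e (sig hsign γ s) then 1 else -1

lemma eps_cases (γ : Γ) (s : S) : eps hsign γ s = 1 ∨ eps hsign γ s = -1 := by
  unfold eps; split <;> simp

lemma smul_e (γ : Γ) (s : S) : γ • e s = eps hsign γ s • e (sig hsign γ s) := by
  have hc := (hsign γ s).choose_spec
  unfold eps
  by_cases hce : γ • e s = e (sig hsign γ s)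
  · rw [if_pos hce, one_smul]; exact hce
  · rw [if_neg hce, neg_one_smul]
    rcases hc with h | h
    · exact absurd h hce
    · exact h

lemma eps_sig_unique {γ : Γ} {s : S} {a : ℝ} {t : S} (ha : a = 1 ∨ a = -1)
    (h : γ • e s = a • e t) : sig hsign γ s = t ∧ eps hsign γ s = a := by
  have h2 : a • e t = eps hsign γ s • e (sig hsign γ s) := by rw [← h, smul_e hsign]
  obtain ⟨h3, h4⟩ := sign_eq ha h2
  exact ⟨h3.symm, h4.symm⟩

lemma one_smul_e (s : S) : (1 : Γ) • e s = (1 : ℝ) • e s := by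
  rw [one_smul, one_smul]

lemma sig_one (s : S) : sig hsign (1 : Γ) s = s :=
  (eps_sig_unique hsign (Or.inl rfl) (one_smul_e s)).1

lemma eps_one (s : S) : eps hsign (1 : Γ) s = 1 :=
  (eps_sig_unique hsign (Or.inl rfl) (one_smul_e s)).2

lemma eps_mul_self (γ : Γ) (s : S) : eps hsign γ s * eps hsign γ s = 1 := by
  rcases eps_cases hsign γ s with h | h <;> rw [h] <;> norm_num

lemma smul_e_mul (γ₂ γ₁ : Γ) (s : S) :
    (γ₂ * γ₁) • e s = (eps hsign γ₂ (sig hsign γ₁ s) * eps hsign γ₁ s) •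
      e (sig hsign γ₂ (sig hsign γ₁ s)) := by
  rw [mul_smul, smul_e hsign γ₁ s, smul_comm, smul_e hsign γ₂, smul_smul, mul_comm]

lemma sig_mul (γ₂ γ₁ : Γ) (s : S) :
    sig hsign (γ₂ * γ₁) s = sig hsign γ₂ (sig hsign γ₁ s) := by
  refine (eps_sig_unique hsign ?_ (smul_e_mul hsign γ₂ γ₁ s)).1
  rcases eps_cases hsign γ₂ (sig hsign γ₁ s) with h | h <;>
    rcases eps_cases hsign γ₁ s with h' | h' <;> rw [h, h'] <;> norm_num

lemma eps_mul (γ₂ γ₁ : Γ) (s : S) :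
    eps hsign (γ₂ * γ₁) s = eps hsign γ₂ (sig hsign γ₁ s) * eps hsign γ₁ s := by
  refine (eps_sig_unique hsign ?_ (smul_e_mul hsign γ₂ γ₁ s)).2
  rcases eps_cases hsign γ₂ (sig hsign γ₁ s) with h | h <;>
    rcases eps_cases hsign γ₁ s with h' | h' <;> rw [h, h'] <;> norm_num

lemma sig_inv (γ : Γ) (s : S) : sig hsign γ⁻¹ (sig hsign γ s) = s := by
  have := sig_mul hsign γ⁻¹ γ s
  rw [inv_mul_cancel, sig_one hsign] at this
  exact this.symm

lemma eps_inv (γ : Γ) (s : S) : eps hsign γ⁻¹ (sig hsign γ s) = eps hsign γ s := by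
  have := eps_mul hsign γ⁻¹ γ s
  rw [inv_mul_cancel, eps_one hsign] at this
  have h2 := congrArg (· * eps hsign γ s) this
  simp only [one_mul, mul_assoc, eps_mul_self hsign γ s, mul_one] at h2
  exact h2.symm


/-- orbit relation -/
def rel (s t : S) : Prop := ∃ γ : Γ, sig hsign γ s = t

lemma rel_refl (s : S) : rel hsign s s := ⟨1, sig_one hsign s⟩

lemma rel_symm {s t : S} (h : rel hsign s t) : rel hsign t s := by
  obtain ⟨γ, hγ⟩ := h
  exact ⟨γ⁻¹, by rw [← hγ, sig_inv hsign]⟩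

lemma rel_trans {s t u : S} (h1 : rel hsign s t) (h2 : rel hsign t u) : rel hsign s u := by
  obtain ⟨γ, hγ⟩ := h1; obtain ⟨δ, hδ⟩ := h2
  exact ⟨δ * γ, by rw [sig_mul hsign, hγ, hδ]⟩

def relSetoid : Setoid S :=
  ⟨rel hsign, ⟨rel_refl hsign, rel_symm hsign, rel_trans hsign⟩⟩

noncomputable def rep (s : S) : S := Quotient.out (Quotient.mk (relSetoid hsign) s)

lemma rep_rel (s : S) : rel hsign (rep hsign s) s :=
  Quotient.exact (Quotient.out_eq (Quotient.mk (relSetoid hsign) s))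

lemma rep_eq_of_rel {s t : S} (h : rel hsign s t) : rep hsign s = rep hsign t :=
  congrArg Quotient.out (Quotient.sound h)

/-- signed stabilizer -/
def stab (s : S) : Set Γ := {γ : Γ | sig hsign γ s = s}

lemma one_mem_stab (s : S) : (1 : Γ) ∈ stab hsign s := sig_one hsign s

lemma mul_mem_stab {s : S} {γ δ : Γ} (hγ : γ ∈ stab hsign s) (hδ : δ ∈ stab hsign s) :
    γ * δ ∈ stab hsign s := by
  simp only [stab, Set.mem_setOf_eq] at *
  rw [sig_mul hsign, hδ, hγ]

lemma inv_mem_stab {s : S} {γ : Γ} (hγ : γ ∈ stab hsign s) : γ⁻¹ ∈ stab hsign s := by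
  simp only [stab, Set.mem_setOf_eq] at *
  conv_lhs => rw [← hγ]
  rw [sig_inv hsign]

lemma stab_finite
    (hstab : ∀ s : S, {γ : Γ | γ • Finsupp.single s (1 : ℝ) = Finsupp.single s (1 : ℝ)}.Finite)
    (s : S) : (stab hsign s).Finite := by
  classical
  set A : Set Γ := {γ : Γ | γ • e s = e s} with hA
  set B : Set Γ := {γ : Γ | γ • e s = - e s} with hB
  have hAfin : A.Finite := hstab s
  have hsub : stab hsign s ⊆ A ∪ B := by
    intro γ hγ
    have hγ' : sig hsign γ s = s := hγ
    have := smul_e hsign γ s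
    rw [hγ'] at this
    rcases eps_cases hsign γ s with h | h
    · left; rw [h, one_smul] at this; exact this
    · right; rw [h, neg_one_smul] at this; exact this
  have hBfin : B.Finite := by
    rcases Set.eq_empty_or_nonempty B with hBe | ⟨b₀, hb₀⟩
    · rw [hBe]; exact Set.finite_empty
    · have hb₀' : b₀ • e s = - e s := hb₀
      have hb₀inv : b₀⁻¹ • e s = - e s := by
        have := congrArg (fun c => b₀⁻¹ • c) hb₀'
        simp only [smul_neg, inv_smul_smul] at this
        have h2 := congrArg Neg.neg this
        rw [neg_neg] at h2
        exact h2.symm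
      have hsubB : B ⊆ (fun a => a * b₀) '' A := by
        intro b hb
        refine ⟨b * b₀⁻¹, ?_, by group⟩
        have hb' : b • e s = - e s := hb
        show (b * b₀⁻¹) • e s = e s
        rw [mul_smul, hb₀inv, smul_neg, hb', neg_neg]
      exact Set.Finite.subset (hAfin.image _) hsubB
  exact (hAfin.union hBfin).subset hsub


section Vpart
variable {V W : Type} [NormedAddCommGroup V] [NormedSpace ℝ V]
  [NormedAddCommGroup W] [NormedSpace ℝ W]
  [DistribMulAction Γ V] [SMulCommClass Γ ℝ V]
  [DistribMulAction Γ W] [SMulCommClass Γ ℝ W]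
  (hstab : ∀ s : S, {γ : Γ | γ • Finsupp.single s (1 : ℝ) = Finsupp.single s (1 : ℝ)}.Finite)
  (φ : V →L[ℝ] W) (hφsurj : Function.Surjective φ)
  (f : (S →₀ ℝ) →ₗ[ℝ] W)
  (K : ℝ) (hK : ∀ w : W, (∃ v, φ v = w) → ∃ v, φ v = w ∧ ‖v‖ ≤ K * ‖w‖)

noncomputable def v0 (s : S) : V := (hK (f (e s)) (hφsurj _)).choose

lemma phi_v0 (s : S) : φ (v0 φ hφsurj f K hK s) = f (e s) :=
  (hK (f (e s)) (hφsurj _)).choose_spec.1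

lemma norm_v0 (s : S) : ‖v0 φ hφsurj f K hK s‖ ≤ K * ‖f (e s)‖ :=
  (hK (f (e s)) (hφsurj _)).choose_spec.2

noncomputable def Hf (s : S) : Finset Γ := (stab_finite hsign hstab s).toFinset

lemma mem_Hf {γ : Γ} {s : S} : γ ∈ Hf hsign hstab s ↔ sig hsign γ s = s :=
  Set.Finite.mem_toFinset _

lemma Hf_card_ne (s : S) : ((Hf hsign hstab s).card : ℝ) ≠ 0 := by
  have : (1 : Γ) ∈ Hf hsign hstab s := (mem_Hf hsign hstab).mpr (sig_one hsign s)
  have hpos : 0 < (Hf hsign hstab s).card := Finset.card_pos.mpr ⟨1, this⟩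
  exact_mod_cast hpos.ne'

noncomputable def u (s : S) : V :=
  ((Hf hsign hstab s).card : ℝ)⁻¹ •
    ∑ h ∈ Hf hsign hstab s, eps hsign h s • (h • v0 φ hφsurj f K hK s)

lemma phi_u (hφequiv : ∀ (γ : Γ) (v : V), φ (γ • v) = γ • φ v)
    (hfequiv : ∀ (γ : Γ) (c : S →₀ ℝ), f (γ • c) = γ • f c) (s : S) :
    φ (u hsign hstab φ hφsurj f K hK s) = f (e s) := by
  have hterm : ∀ h ∈ Hf hsign hstab s,
      φ (eps hsign h s • (h • v0 φ hφsurj f K hK s)) = f (e s) := by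
    intro h hh
    have hhs : sig hsign h s = s := (mem_Hf hsign hstab).mp hh
    rw [map_smul, hφequiv, phi_v0, ← hfequiv, smul_e hsign, hhs, map_smul, smul_smul,
      eps_mul_self hsign, one_smul]
  rw [u, map_smul, map_sum, Finset.sum_congr rfl hterm, Finset.sum_const,
    ← Nat.cast_smul_eq_nsmul ℝ, smul_smul, inv_mul_cancel₀ (Hf_card_ne hsign hstab s), one_smul]

lemma smul_u {g : Γ} {s : S} (hg : sig hsign g s = s) :
    g • u hsign hstab φ hφsurj f K hK s =
      eps hsign g s • u hsign hstab φ hφsurj f K hK s := by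
  set c : ℝ := ((Hf hsign hstab s).card : ℝ)⁻¹ with hc
  set v : V := v0 φ hφsurj f K hK s with hv
  have hsum : eps hsign g s • (g • ∑ h ∈ Hf hsign hstab s, eps hsign h s • (h • v)) =
      ∑ h ∈ Hf hsign hstab s, eps hsign h s • (h • v) := by
    rw [Finset.smul_sum, Finset.smul_sum]
    refine Finset.sum_nbij' (i := fun h => g * h) (j := fun h => g⁻¹ * h) ?_ ?_ ?_ ?_ ?_
    · intro h hh
      exact (mem_Hf hsign hstab).mpr (mul_mem_stab hsign hg ((mem_Hf hsign hstab).mp hh))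
    · intro h hh
      exact (mem_Hf hsign hstab).mpr
        (mul_mem_stab hsign (inv_mem_stab hsign hg) ((mem_Hf hsign hstab).mp hh))
    · intro h _; group
    · intro h _; group
    · intro h hh
      have hh' : sig hsign h s = s := (mem_Hf hsign hstab).mp hh
      have hmul : eps hsign (g * h) s = eps hsign g s * eps hsign h s := by
        rw [eps_mul hsign, hh']
      rw [smul_comm g (eps hsign h s), smul_smul, ← hmul, mul_smul g h v]
  have key : eps hsign g s • (g • u hsign hstab φ hφsurj f K hK s) =
      u hsign hstab φ hφsurj f K hK s := by
    rw [u, ← hc, ← hv, smul_comm g c, smul_comm (eps hsign g s) c, hsum]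
  have h2 := congrArg (fun x => eps hsign g s • x) key
  rw [smul_smul, eps_mul_self hsign, one_smul] at h2
  rw [h2]

lemma norm_u (L : ℝ) (hL0 : 0 ≤ L) (hL : ∀ (γ : Γ) (x : V), ‖γ • x‖ ≤ L * ‖x‖) (s : S) :
    ‖u hsign hstab φ hφsurj f K hK s‖ ≤ L * (K * ‖f (e s)‖) := by
  have hbound : ∀ h ∈ Hf hsign hstab s,
      ‖eps hsign h s • (h • v0 φ hφsurj f K hK s)‖ ≤ L * (K * ‖f (e s)‖) := by
    intro h _
    rw [norm_smul]
    have he : ‖eps hsign h s‖ = 1 := by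
      rcases eps_cases hsign h s with h' | h' <;> rw [h'] <;> norm_num
    rw [he, one_mul]
    calc ‖h • v0 φ hφsurj f K hK s‖ ≤ L * ‖v0 φ hφsurj f K hK s‖ := hL _ _
      _ ≤ L * (K * ‖f (e s)‖) :=
        mul_le_mul_of_nonneg_left (norm_v0 φ hφsurj f K hK s) hL0
  have hsumb : ‖∑ h ∈ Hf hsign hstab s, eps hsign h s • (h • v0 φ hφsurj f K hK s)‖ ≤
      ((Hf hsign hstab s).card : ℝ) * (L * (K * ‖f (e s)‖)) := by
    calc ‖∑ h ∈ Hf hsign hstab s, eps hsign h s • (h • v0 φ hφsurj f K hK s)‖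
        ≤ ∑ h ∈ Hf hsign hstab s, ‖eps hsign h s • (h • v0 φ hφsurj f K hK s)‖ :=
          norm_sum_le _ _
      _ ≤ ∑ _h ∈ Hf hsign hstab s, L * (K * ‖f (e s)‖) := Finset.sum_le_sum hbound
      _ = ((Hf hsign hstab s).card : ℝ) * (L * (K * ‖f (e s)‖)) := by
          rw [Finset.sum_const, nsmul_eq_mul]
  have hcne := Hf_card_ne hsign hstab s
  have hcpos : (0:ℝ) < ((Hf hsign hstab s).card : ℝ) := by
    rcases (Nat.cast_pos (α := ℝ)).mpr (Nat.pos_of_ne_zero (by exact_mod_cast hcne)) with h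
    exact h
  rw [u, norm_smul]
  have hninv : ‖(((Hf hsign hstab s).card : ℝ))⁻¹‖ = (((Hf hsign hstab s).card : ℝ))⁻¹ := by
    rw [Real.norm_eq_abs, abs_of_nonneg (by positivity)]
  rw [hninv]
  calc (((Hf hsign hstab s).card : ℝ))⁻¹ *
        ‖∑ h ∈ Hf hsign hstab s, eps hsign h s • (h • v0 φ hφsurj f K hK s)‖
      ≤ (((Hf hsign hstab s).card : ℝ))⁻¹ *
        (((Hf hsign hstab s).card : ℝ) * (L * (K * ‖f (e s)‖))) :=
        mul_le_mul_of_nonneg_left hsumb (by positivity)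
    _ = L * (K * ‖f (e s)‖) := by
        rw [← mul_assoc, inv_mul_cancel₀ hcne, one_mul]

noncomputable def gam (s : S) : Γ := (rep_rel hsign s).choose

lemma sig_gam (s : S) : sig hsign (gam hsign s) (rep hsign s) = s :=
  (rep_rel hsign s).choose_spec

noncomputable def Phi (s : S) : V :=
  eps hsign (gam hsign s) (rep hsign s) •
    (gam hsign s • u hsign hstab φ hφsurj f K hK (rep hsign s))

lemma phi_Phi (hφequiv : ∀ (γ : Γ) (v : V), φ (γ • v) = γ • φ v)
    (hfequiv : ∀ (γ : Γ) (c : S →₀ ℝ), f (γ • c) = γ • f c) (s : S) :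
    φ (Phi hsign hstab φ hφsurj f K hK s) = f (e s) := by
  rw [Phi, map_smul, hφequiv, phi_u hsign hstab φ hφsurj f K hK hφequiv hfequiv,
    ← hfequiv, smul_e hsign (gam hsign s) (rep hsign s), sig_gam hsign s, map_smul,
    smul_smul, eps_mul_self hsign, one_smul]

lemma norm_Phi (L : ℝ) (hL0 : 0 ≤ L) (hL : ∀ (γ : Γ) (x : V), ‖γ • x‖ ≤ L * ‖x‖) (s : S) :
    ‖Phi hsign hstab φ hφsurj f K hK s‖ ≤ L * (L * (K * ‖f (e (rep hsign s))‖)) := by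
  rw [Phi, norm_smul]
  have he : ‖eps hsign (gam hsign s) (rep hsign s)‖ = 1 := by
    rcases eps_cases hsign (gam hsign s) (rep hsign s) with h' | h' <;> rw [h'] <;> norm_num
  rw [he, one_mul]
  calc ‖gam hsign s • u hsign hstab φ hφsurj f K hK (rep hsign s)‖
      ≤ L * ‖u hsign hstab φ hφsurj f K hK (rep hsign s)‖ := hL _ _
    _ ≤ L * (L * (K * ‖f (e (rep hsign s))‖)) :=
        mul_le_mul_of_nonneg_left (norm_u hsign hstab φ hφsurj f K hK L hL0 hL _) hL0

lemma Phi_equivariant (γ : Γ) (s : S) :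
    γ • Phi hsign hstab φ hφsurj f K hK s =
      eps hsign γ s • Phi hsign hstab φ hφsurj f K hK (sig hsign γ s) := by
  set t : S := sig hsign γ s with ht
  have hrel : rel hsign s t := ⟨γ, rfl⟩
  have hrt : rep hsign t = rep hsign s := (rep_eq_of_rel hsign hrel).symm
  set r : S := rep hsign s with hr
  set gs : Γ := gam hsign s with hgs0
  set gt : Γ := gam hsign t with hgt0
  have hgs : sig hsign gs r = s := sig_gam hsign s
  have hgt : sig hsign gt r = t := by
    have := sig_gam hsign t
    rwa [hrt] at this
  set g : Γ := gt⁻¹ * (γ * gs) with hg0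
  have hgr : sig hsign g r = r := by
    have h1 : sig hsign (γ * gs) r = t := by rw [sig_mul hsign, hgs, ht]
    rw [hg0, sig_mul hsign, h1, ← hgt, sig_inv hsign]
  have hge : eps hsign g r = eps hsign gt r * (eps hsign γ s * eps hsign gs r) := by
    have h1 : sig hsign (γ * gs) r = t := by rw [sig_mul hsign, hgs, ht]
    rw [hg0, eps_mul hsign gt⁻¹ (γ * gs) r, h1, eps_mul hsign γ gs r, hgs]
    congr 1
    rw [← hgt, eps_inv hsign]
  have hscal : eps hsign gs r * eps hsign g r = eps hsign γ s * eps hsign gt r := by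
    have hs2 := eps_mul_self hsign gs r
    rw [hge]
    linear_combination eps hsign γ s * eps hsign gt r * hs2
  have hgg : γ * gs = gt * g := by rw [hg0]; group
  calc γ • Phi hsign hstab φ hφsurj f K hK s
      = eps hsign gs r • ((γ * gs) • u hsign hstab φ hφsurj f K hK r) := by
        rw [Phi, ← hr, ← hgs0, smul_comm, mul_smul]
    _ = eps hsign gs r • (gt • (g • u hsign hstab φ hφsurj f K hK r)) := by
        rw [hgg, mul_smul]
    _ = eps hsign gs r • (gt • (eps hsign g r • u hsign hstab φ hφsurj f K hK r)) := by
        rw [smul_u hsign hstab φ hφsurj f K hK hgr]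
    _ = (eps hsign gs r * eps hsign g r) • (gt • u hsign hstab φ hφsurj f K hK r) := by
        rw [smul_comm gt (eps hsign g r), smul_smul]
    _ = eps hsign γ s • (eps hsign gt r • (gt • u hsign hstab φ hφsurj f K hK r)) := by
        rw [smul_smul, hscal]
    _ = eps hsign γ s • Phi hsign hstab φ hφsurj f K hK t := by
        rw [Phi, ← hgt0, hrt]

end Vpart
end MY



/-- The `ℓ¹` norm of a finitely supported real function. -/
noncomputable def l1Norm {T : Type} (c : T →₀ ℝ) : ℝ :=
  ∑ t ∈ c.support, |c t|

/-- normed version of Lemma 52 of Mineyev–Yaman: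
`P = S →₀ ℝ` with the `ℓ¹` norm, with a linear `Γ`-action sending indicators to signed
indicators and with finite stabilizers of indicators, is `b`-projective: every bounded
`Γ`-equivariant map `f : P → W` lifts along a surjective undistorted bounded `Γ`-equivariant
map `φ : V → W` to a bounded `Γ`-equivariant map `f̃ : P → V`. -/
theorem b_projective_of_signed_indicator_action
    {Γ : Type} [Group Γ] {S : Type}
    [DistribMulAction Γ (S →₀ ℝ)] [SMulCommClass Γ ℝ (S →₀ ℝ)]
    (hsign : ∀ (γ : Γ) (s : S), ∃ t : S,
      γ • Finsupp.single s (1 : ℝ) = Finsupp.single t (1 : ℝ) ∨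
      γ • Finsupp.single s (1 : ℝ) = - Finsupp.single t (1 : ℝ))
    (hstab : ∀ s : S, {γ : Γ | γ • Finsupp.single s (1 : ℝ) = Finsupp.single s (1 : ℝ)}.Finite)
    (V W : Type) [NormedAddCommGroup V] [NormedSpace ℝ V]
    [NormedAddCommGroup W] [NormedSpace ℝ W]
    [DistribMulAction Γ V] [SMulCommClass Γ ℝ V]
    [DistribMulAction Γ W] [SMulCommClass Γ ℝ W]
    (hV : ∃ L : ℝ, ∀ (γ : Γ) (v : V), ‖γ • v‖ ≤ L * ‖v‖)
    (hW : ∃ L : ℝ, ∀ (γ : Γ) (w : W), ‖γ • w‖ ≤ L * ‖w‖)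
    (φ : V →L[ℝ] W)
    (hφsurj : Function.Surjective φ)
    (hφequiv : ∀ (γ : Γ) (v : V), φ (γ • v) = γ • φ v)
    (hφundist : ∃ K : ℝ, 0 < K ∧ ∀ w : W, (∃ v, φ v = w) → ∃ v, φ v = w ∧ ‖v‖ ≤ K * ‖w‖)
    (f : (S →₀ ℝ) →ₗ[ℝ] W)
    (hfbdd : ∃ C : ℝ, ∀ c : S →₀ ℝ, ‖f c‖ ≤ C * l1Norm c)
    (hfequiv : ∀ (γ : Γ) (c : S →₀ ℝ), f (γ • c) = γ • f c) :
    ∃ ft : (S →₀ ℝ) →ₗ[ℝ] V,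
      (∃ C : ℝ, ∀ c : S →₀ ℝ, ‖ft c‖ ≤ C * l1Norm c) ∧
      (∀ (γ : Γ) (c : S →₀ ℝ), ft (γ • c) = γ • ft c) ∧
      (∀ c : S →₀ ℝ, φ (ft c) = f c) := by
  classical
  obtain ⟨K, hK0, hK⟩ := hφundist
  obtain ⟨L₀, hL₀⟩ := hV
  set L : ℝ := |L₀| + 1 with hLdef
  have hL0 : (0:ℝ) ≤ L := by positivity
  have hL : ∀ (γ : Γ) (x : V), ‖γ • x‖ ≤ L * ‖x‖ := fun γ x =>
    (hL₀ γ x).trans (by nlinarith [norm_nonneg x, le_abs_self L₀])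
  obtain ⟨C₀, hC₀⟩ := hfbdd
  have hl1e : ∀ s : S, l1Norm (MY.e s) = 1 := by
    intro s
    rw [l1Norm, MY.e, Finsupp.support_single_ne_zero _ one_ne_zero]
    simp
  have hfe : ∀ s : S, ‖f (MY.e s)‖ ≤ |C₀| := by
    intro s
    have h := hC₀ (MY.e s)
    rw [hl1e s, mul_one] at h
    exact h.trans (le_abs_self C₀)
  set Φ : S → V := MY.Phi hsign hstab φ hφsurj f K hK with hΦ
  have hPhiEq : ∀ (γ : Γ) (s : S), γ • Φ s = MY.eps hsign γ s • Φ (MY.sig hsign γ s) := by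
    intro γ s; rw [hΦ]; exact MY.Phi_equivariant hsign hstab φ hφsurj f K hK γ s
  have hPhiφ : ∀ s : S, φ (Φ s) = f (MY.e s) := by
    intro s; rw [hΦ]; exact MY.phi_Phi hsign hstab φ hφsurj f K hK hφequiv hfequiv s
  have hPhiB : ∀ s : S, ‖Φ s‖ ≤ L * (L * (K * |C₀|)) := by
    intro s
    rw [hΦ]
    refine (MY.norm_Phi hsign hstab φ hφsurj f K hK L hL0 hL s).trans ?_
    have h1 : K * ‖f (MY.e (MY.rep hsign s))‖ ≤ K * |C₀| :=
      mul_le_mul_of_nonneg_left (hfe _) hK0.le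
    exact mul_le_mul_of_nonneg_left (mul_le_mul_of_nonneg_left h1 hL0) hL0
  have hft : ∀ t : S, (Finsupp.linearCombination ℝ Φ) (MY.e t) = Φ t := by
    intro t; rw [MY.e, Finsupp.linearCombination_single, one_smul]
  have hsb : ∀ (s : S) (b : ℝ), Finsupp.single s b = b • MY.e s := by
    intro s b; rw [MY.e, Finsupp.smul_single, smul_eq_mul, mul_one]
  refine ⟨Finsupp.linearCombination ℝ Φ, ⟨L * (L * (K * |C₀|)), fun c => ?_⟩, ?_, ?_⟩
  · rw [Finsupp.linearCombination_apply, Finsupp.sum]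
    calc ‖∑ s ∈ c.support, c s • Φ s‖ ≤ ∑ s ∈ c.support, ‖c s • Φ s‖ := norm_sum_le _ _
      _ ≤ ∑ s ∈ c.support, |c s| * (L * (L * (K * |C₀|))) := by
          refine Finset.sum_le_sum fun s _ => ?_
          rw [norm_smul, Real.norm_eq_abs]
          exact mul_le_mul_of_nonneg_left (hPhiB s) (abs_nonneg _)
      _ = (L * (L * (K * |C₀|))) * l1Norm c := by
          rw [l1Norm, ← Finset.sum_mul, mul_comm]
  · intro γ c
    induction c using Finsupp.induction_linear with
    | zero => rw [smul_zero, map_zero, smul_zero]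
    | add a b ha hb => rw [smul_add, map_add, ha, hb, map_add, smul_add]
    | single s b =>
        have L1 : (Finsupp.linearCombination ℝ Φ) (γ • Finsupp.single s b) =
            b • (MY.eps hsign γ s • Φ (MY.sig hsign γ s)) := by
          rw [hsb, smul_comm γ b, MY.smul_e hsign γ s, map_smul, map_smul, hft]
        have L2 : γ • (Finsupp.linearCombination ℝ Φ) (Finsupp.single s b) =
            b • (MY.eps hsign γ s • Φ (MY.sig hsign γ s)) := by
          rw [hsb, map_smul, hft, smul_comm γ b, hPhiEq]
        rw [L1, L2]
  · intro c
    induction c using Finsupp.induction_linear with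
    | zero => rw [map_zero, map_zero, map_zero]
    | add a b ha hb => rw [map_add, map_add, ha, hb, map_add]
    | single s b => rw [hsb, map_smul, hft, map_smul, hPhiφ s, ← map_smul f, ← hsb]
end

section
/- Let S be a type, and let ∂ : ((S × S) →₀ ℝ) → (S →₀ ℝ) be the linear map sending the indicator of a pair (x, y) to (indicator of y) − (indicator of x). Then for every finitely supported function c : S →₀ ℝ whose coefficients sum to 0, there exists a : (S × S) →₀ ℝ with ∂a = c and ‖a‖₁ ≤ ‖c‖₁. -/
/-- The boundary map `∂ : C₁(S) → C₀(S)` sending the indicator of `(x, y)` to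
`(indicator of y) − (indicator of x)`. -/
noncomputable def bdryOne (S : Type) : ((S × S) →₀ ℝ) →ₗ[ℝ] (S →₀ ℝ) :=
  Finsupp.linearCombination ℝ fun p : S × S =>
    Finsupp.single p.2 (1 : ℝ) - Finsupp.single p.1 (1 : ℝ)

lemma l1_eq_sum {T : Type} (c : T →₀ ℝ) (s : Finset T) (h : c.support ⊆ s) :
    l1Norm c = ∑ t ∈ s, |c t| := by
  refine Finset.sum_subset h fun t _ ht => ?_
  simp [Finsupp.notMem_support_iff.mp ht]

lemma l1_add_le {T : Type} (a b : T →₀ ℝ) : l1Norm (a + b) ≤ l1Norm a + l1Norm b := by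
  classical
  rw [l1_eq_sum (a + b) (a.support ∪ b.support) (Finsupp.support_add),
      l1_eq_sum a (a.support ∪ b.support) Finset.subset_union_left,
      l1_eq_sum b (a.support ∪ b.support) Finset.subset_union_right,
      ← Finset.sum_add_distrib]
  exact Finset.sum_le_sum fun t _ => by simpa using abs_add_le (a t) (b t)

lemma l1_single_le {T : Type} (p : T) (m : ℝ) : l1Norm (Finsupp.single p m) ≤ |m| := by
  unfold l1Norm
  rcases eq_or_ne m 0 with h | h
  · simp [h]
  · rw [Finsupp.support_single_ne_zero _ h]
    simp

/-- existence form of the contracting chain `Φ` of Mineyev–Yaman: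
every finitely supported real function on `S` whose coefficients sum to `0` has a filling
`a` with `∂a = c` and `‖a‖₁ ≤ ‖c‖₁`. -/
theorem exists_filling_of_sum_zero {S : Type} (c : S →₀ ℝ)
    (hc : (c.sum fun _ r => r) = 0) :
    ∃ a : (S × S) →₀ ℝ, bdryOne S a = c ∧ l1Norm a ≤ l1Norm c := by
  classical
  suffices H : ∀ n (c : S →₀ ℝ), (c.sum fun _ r => r) = 0 → c.support.card ≤ n →
      ∃ a : (S × S) →₀ ℝ, bdryOne S a = c ∧ l1Norm a ≤ l1Norm c from
    H c.support.card c hc le_rfl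
  intro n
  induction n with
  | zero =>
    intro c hc hn
    have hc0 : c = 0 := by
      rwa [Nat.le_zero, Finset.card_eq_zero, Finsupp.support_eq_empty] at hn
    exact ⟨0, by simp [hc0], by simp [hc0, l1Norm]⟩
  | succ n ih =>
    intro c hc hn
    rcases eq_or_ne c 0 with rfl | hc0
    · exact ⟨0, by simp, by simp [l1Norm]⟩
    have hsum : ∑ t ∈ c.support, c t = 0 := hc
    obtain ⟨t0, ht0⟩ := Finsupp.ne_iff.mp hc0
    rw [Finsupp.coe_zero, Pi.zero_apply] at ht0
    have ht0s : t0 ∈ c.support := Finsupp.mem_support_iff.mpr ht0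
    have hx : ∃ x, 0 < c x := by
      by_contra h
      push_neg at h
      have : (∑ t ∈ c.support, c t) < ∑ t ∈ c.support, (0 : ℝ) :=
        Finset.sum_lt_sum (fun t _ => h t) ⟨t0, ht0s, lt_of_le_of_ne (h t0) ht0⟩
      simp [hsum] at this
    have hy : ∃ y, c y < 0 := by
      by_contra h
      push_neg at h
      have : (∑ t ∈ c.support, (0 : ℝ)) < ∑ t ∈ c.support, c t :=
        Finset.sum_lt_sum (fun t _ => h t) ⟨t0, ht0s, lt_of_le_of_ne (h t0) (Ne.symm ht0)⟩
      simp [hsum] at this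
    obtain ⟨x, hx⟩ := hx
    obtain ⟨y, hy⟩ := hy
    have hxy : x ≠ y := fun h => by rw [h] at hx; linarith
    have hyx : y ≠ x := Ne.symm hxy
    set m := min (c x) (-(c y)) with hm
    have hm0 : 0 < m := lt_min hx (by linarith)
    have hmx : m ≤ c x := min_le_left _ _
    have hmy : m ≤ -(c y) := min_le_right _ _
    set d := Finsupp.single x m - Finsupp.single y m with hd
    set c' := c - d with hc'def
    have hvx : c' x = c x - m := by
      simp [hc'def, hd, Finsupp.single_apply, hyx]
    have hvy : c' y = c y + m := by
      simp [hc'def, hd, Finsupp.single_apply, hxy]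
    have hvo : ∀ t, t ≠ x → t ≠ y → c' t = c t := by
      intro t htx hty
      simp [hc'def, hd, Finsupp.single_apply, Ne.symm htx, Ne.symm hty]
    have hsub : c'.support ⊆ c.support := by
      intro t ht
      rw [Finsupp.mem_support_iff] at ht ⊢
      intro hct
      rcases eq_or_ne t x with rfl | htx
      · exact absurd hct (by linarith)
      rcases eq_or_ne t y with rfl | hty
      · exact absurd hct (by linarith)
      · exact ht (by rw [hvo t htx hty, hct])
    have hxs : x ∈ c.support := Finsupp.mem_support_iff.mpr (by linarith)
    have hys : y ∈ c.support := Finsupp.mem_support_iff.mpr (by linarith)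
    -- the sum of c' is zero
    have hsub_idx : ∀ (f g : S →₀ ℝ),
        ((f - g).sum fun _ r => r) = (f.sum fun _ r => r) - (g.sum fun _ r => r) :=
      fun f g => Finsupp.sum_sub_index (fun a b₁ b₂ => rfl)
    have hc'sum : (c'.sum fun _ r => r) = 0 := by
      rw [hc'def, hsub_idx, hc, hd, hsub_idx, Finsupp.sum_single_index rfl,
        Finsupp.sum_single_index rfl]
      ring
    -- the support of c' is strictly smaller
    have hcard : c'.support.card ≤ n := by
      have hdrop : ∃ z ∈ c.support, c' z = 0 := by
        rcases min_cases (c x) (-(c y)) with ⟨h1, _⟩ | ⟨h1, _⟩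
        · exact ⟨x, hxs, by rw [hvx, hm, h1]; ring⟩
        · exact ⟨y, hys, by rw [hvy, hm, h1]; ring⟩
      obtain ⟨z, hzs, hz⟩ := hdrop
      have : c'.support ⊆ c.support.erase z := by
        intro t ht
        refine Finset.mem_erase.mpr ⟨?_, hsub ht⟩
        intro h
        exact (Finsupp.mem_support_iff.mp ht) (h ▸ hz)
      calc c'.support.card ≤ (c.support.erase z).card := Finset.card_le_card this
        _ = c.support.card - 1 := Finset.card_erase_of_mem hzs
        _ ≤ n := by omega
    -- the l1 norm decreased by 2m
    have hkey : l1Norm c' = l1Norm c - 2 * m := by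
      rw [l1_eq_sum c' c.support hsub]
      have hpt : ∀ t ∈ c.support, |c' t| = |c t| + (|c' t| - |c t|) := fun t _ => by ring
      rw [Finset.sum_congr rfl hpt, Finset.sum_add_distrib]
      have hxy' : ({x, y} : Finset S) ⊆ c.support := by
        intro t ht
        rcases Finset.mem_insert.mp ht with rfl | ht
        · exact hxs
        · exact (Finset.mem_singleton.mp ht) ▸ hys
      have hzero : ∀ t ∈ c.support, t ∉ ({x, y} : Finset S) → |c' t| - |c t| = 0 := by
        intro t _ ht
        simp only [Finset.mem_insert, Finset.mem_singleton, not_or] at ht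
        rw [hvo t ht.1 ht.2]
        ring
      rw [← Finset.sum_subset hxy' hzero, Finset.sum_pair hxy]
      have e1 : |c' x| - |c x| = -m := by
        rw [hvx, abs_of_nonneg (by linarith), abs_of_pos hx]; ring
      have e2 : |c' y| - |c y| = -m := by
        rw [hvy, abs_of_nonpos (by linarith), abs_of_neg hy]; ring
      rw [e1, e2]
      unfold l1Norm
      ring
    obtain ⟨a', ha1, ha2⟩ := ih c' hc'sum hcard
    refine ⟨a' + Finsupp.single (y, x) m, ?_, ?_⟩
    · have hb : bdryOne S (Finsupp.single (y, x) m) = d := by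
        rw [hd, bdryOne, Finsupp.linearCombination_single]
        simp [smul_sub, Finsupp.smul_single]
      rw [map_add, ha1, hb, hc'def, sub_add_cancel]
    · calc l1Norm (a' + Finsupp.single (y, x) m)
          ≤ l1Norm a' + l1Norm (Finsupp.single (y, x) m) := l1_add_le _ _
        _ ≤ l1Norm c' + |m| := add_le_add ha2 (l1_single_le _ _)
        _ = l1Norm c - 2 * m + m := by rw [hkey, abs_of_pos hm0]
        _ ≤ l1Norm c := by linarith
end

section
/- Let Γ be a group, I a finite nonempty index type, and {Γ_i}_{i∈I} a family of subgroups of Γ. Let S := Γ × I and let π : S → Σ_{i∈I} (Γ ⧸ Γ_i) be the map (g, i) ↦ (i, gΓ_i). Call a pair (x₀, x₁) ∈ S × S degenerate if π(x₀) = π(x₁), and a triple (x₀, x₁, x₂) ∈ S × S × S degenerate if π(x₀) = π(x₁) = π(x₂). Let ∂ : ((S×S×S) →₀ ℝ) → ((S×S) →₀ ℝ) be the linear map sending the indicator of (x₀,x₁,x₂) to (x₁,x₂) − (x₀,x₂) + (x₀,x₁) (indicators), and let D₁ ⊆ (S×S) →₀ ℝ be the linear span of the indicators of degenerate pairs. Then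 for every b : (S×S) →₀ ℝ which is supported on non-degenerate pairs and satisfies ∑_{(x₀,x₁)} b(x₀,x₁)·(indicator of π(x₁) − indicator of π(x₀)) = 0 in (Σ_{i∈I} Γ ⧸ Γ_i) →₀ ℝ, there exists a : (S×S×S) →₀ ℝ such that ∂a − b ∈ D₁ and the restriction a' of a to non-degenerate triples satisfies ‖a'‖₁ ≤ 3‖b‖₁. -/
open scoped Classical

variable {Γ : Type} [Group Γ] {I : Type}

/-- The projection `Γ × I → Σ i, Γ ⧸ Γᵢ`, `(g, i) ↦ (i, gΓᵢ)`. -/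
def cosetProj (H : I → Subgroup Γ) : Γ × I → Σ i : I, Γ ⧸ H i :=
  fun x => ⟨x.2, QuotientGroup.mk x.1⟩

/-- The boundary map `∂ : C₂ → C₁` on the free real vector space over triples, sending the
indicator of `(x₀, x₁, x₂)` to `(x₁,x₂) − (x₀,x₂) + (x₀,x₁)` (indicators). -/
noncomputable def bdryTwo (Γ I : Type) :
    (((Γ × I) × (Γ × I) × (Γ × I)) →₀ ℝ) →ₗ[ℝ] (((Γ × I) × (Γ × I)) →₀ ℝ) :=
  Finsupp.linearCombination ℝ fun t : (Γ × I) × (Γ × I) × (Γ × I) =>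
    Finsupp.single (t.2.1, t.2.2) (1 : ℝ) - Finsupp.single (t.1, t.2.2) (1 : ℝ)
      + Finsupp.single (t.1, t.2.1) (1 : ℝ)

/-- The augmentation `C₁ → ℝ(Γ/Γ')`, sending the indicator of `(x₀, x₁)` to
`(indicator of π x₁) − (indicator of π x₀)`. -/
noncomputable def augOne (H : I → Subgroup Γ) :
    (((Γ × I) × (Γ × I)) →₀ ℝ) →ₗ[ℝ] ((Σ i : I, Γ ⧸ H i) →₀ ℝ) :=
  Finsupp.linearCombination ℝ fun p : (Γ × I) × (Γ × I) =>
    Finsupp.single (cosetProj H p.2) (1 : ℝ) - Finsupp.single (cosetProj H p.1) (1 : ℝ)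

/-- The span of the indicators of degenerate pairs (both vertices in the same coset). -/
noncomputable def degenPairs (H : I → Subgroup Γ) :
    Submodule ℝ (((Γ × I) × (Γ × I)) →₀ ℝ) :=
  Submodule.span ℝ
    {f | ∃ p : (Γ × I) × (Γ × I), cosetProj H p.1 = cosetProj H p.2 ∧
      f = Finsupp.single p (1 : ℝ)}

/-! ### Auxiliary lemmas on the `ℓ¹` norm -/

lemma l1Norm_eq_sum {T : Type} (c : T →₀ ℝ) {s : Finset T} (h : c.support ⊆ s) :
    l1Norm c = ∑ t ∈ s, |c t| :=
  Finset.sum_subset h (fun x _ hx => by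
    simp [Finsupp.notMem_support_iff.mp hx])

lemma l1Norm_add_le {T : Type} (f g : T →₀ ℝ) :
    l1Norm (f + g) ≤ l1Norm f + l1Norm g := by
  rw [l1Norm_eq_sum (f + g) (Finsupp.support_add),
    l1Norm_eq_sum f (Finset.subset_union_left (s₂ := g.support)),
    l1Norm_eq_sum g (Finset.subset_union_right (s₁ := f.support)),
    ← Finset.sum_add_distrib]
  exact Finset.sum_le_sum fun t _ => by simpa using abs_add_le (f t) (g t)

lemma l1Norm_neg {T : Type} (f : T →₀ ℝ) : l1Norm (-f) = l1Norm f := by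
  simp [l1Norm, Finsupp.support_neg]

lemma l1Norm_sub_le {T : Type} (f g : T →₀ ℝ) :
    l1Norm (f - g) ≤ l1Norm f + l1Norm g := by
  rw [sub_eq_add_neg]
  calc l1Norm (f + -g) ≤ l1Norm f + l1Norm (-g) := l1Norm_add_le f (-g)
    _ = l1Norm f + l1Norm g := by rw [l1Norm_neg]

lemma l1Norm_single_le {T : Type} (t : T) (c : ℝ) :
    l1Norm (Finsupp.single t c) ≤ |c| := by
  rw [l1Norm_eq_sum (Finsupp.single t c) Finsupp.support_single_subset]
  simp

lemma l1Norm_zero {T : Type} : l1Norm (0 : T →₀ ℝ) = 0 := by simp [l1Norm]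

lemma l1Norm_filter_le {T : Type} (P : T → Prop) [DecidablePred P] (f : T →₀ ℝ) :
    l1Norm (f.filter P) ≤ l1Norm f := by
  classical
  have hsub : (f.filter P).support ⊆ f.support := by
    intro t ht
    simp only [Finsupp.mem_support_iff, Finsupp.filter_apply] at ht ⊢
    intro h; apply ht; split <;> simp [h]
  calc l1Norm (f.filter P) = ∑ t ∈ f.support, |(f.filter P) t| := l1Norm_eq_sum _ hsub
    _ ≤ ∑ t ∈ f.support, |f t| := by
        refine Finset.sum_le_sum fun t _ => ?_
        rw [Finsupp.filter_apply]
        split <;> simp [abs_nonneg]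
    _ = l1Norm f := rfl

lemma l1Norm_finset_sum_le {T ι : Type} (s : Finset ι) (f : ι → (T →₀ ℝ)) :
    l1Norm (∑ i ∈ s, f i) ≤ ∑ i ∈ s, l1Norm (f i) := by
  classical
  induction s using Finset.cons_induction with
  | empty => simp [l1Norm_zero]
  | cons i s hi ih =>
      rw [Finset.sum_cons, Finset.sum_cons]
      exact le_trans (l1Norm_add_le _ _) (by linarith)

/-- the relative cone of Mineyev–Yaman: for a group-pair `(Γ, {Γᵢ}_{i∈I})`
with `I` finite and nonempty, every `1`-chain `b` supported on non-degenerate pairs which is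
a cycle for the augmentation to `ℝ(Γ/Γ')` admits a `2`-chain `a` with `∂a ≡ b` modulo
degenerate pairs, whose restriction to non-degenerate triples has `ℓ¹` norm at most `3‖b‖₁`. -/
theorem relative_cone (H : I → Subgroup Γ) [Fintype I] [Nonempty I]
    (b : ((Γ × I) × (Γ × I)) →₀ ℝ)
    (hsupp : ∀ p ∈ b.support, cosetProj H p.1 ≠ cosetProj H p.2)
    (hcycle : augOne H b = 0) :
    ∃ a : ((Γ × I) × (Γ × I) × (Γ × I)) →₀ ℝ,
      bdryTwo Γ I a - b ∈ degenPairs H ∧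
      l1Norm (a.filter fun t =>
          ¬(cosetProj H t.1 = cosetProj H t.2.1 ∧ cosetProj H t.2.1 = cosetProj H t.2.2))
        ≤ 3 * l1Norm b := by
  classical
  -- a basepoint and a choice of coset representatives
  set x : Γ × I := (1, Classical.arbitrary I) with hx
  set r : (Σ i : I, Γ ⧸ H i) → Γ × I := fun c => (c.2.out, c.1) with hrdef
  have hπr : ∀ c, cosetProj H (r c) = c := by
    rintro ⟨i, q⟩
    show (⟨i, QuotientGroup.mk q.out⟩ : Σ i : I, Γ ⧸ H i) = ⟨i, q⟩
    rw [show QuotientGroup.mk q.out = q from Quotient.out_eq' q]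
  -- the coning construction
  set g : ((Γ × I) × (Γ × I)) → (((Γ × I) × (Γ × I) × (Γ × I)) →₀ ℝ) := fun p =>
    Finsupp.single (x, p.1, p.2) 1 + Finsupp.single (x, r (cosetProj H p.1), p.1) 1
      - Finsupp.single (x, r (cosetProj H p.2), p.2) 1 with hg
  refine ⟨Finsupp.linearCombination ℝ g b, ?_, ?_⟩
  · -- boundary computation
    set d : ((Γ × I) × (Γ × I)) → (((Γ × I) × (Γ × I)) →₀ ℝ) := fun p =>
      Finsupp.single (r (cosetProj H p.1), p.1) 1
        - Finsupp.single (r (cosetProj H p.2), p.2) 1 with hd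
    set L : ((Σ i : I, Γ ⧸ H i) →₀ ℝ) →ₗ[ℝ] (((Γ × I) × (Γ × I)) →₀ ℝ) :=
      Finsupp.lmapDomain ℝ ℝ (fun c => (x, r c)) with hL
    set e : ((Γ × I) × (Γ × I)) → (((Γ × I) × (Γ × I)) →₀ ℝ) := fun p =>
      Finsupp.single (x, r (cosetProj H p.1)) 1
        - Finsupp.single (x, r (cosetProj H p.2)) 1 with he
    have hbd : ∀ p : ((Γ × I) × (Γ × I)),
        bdryTwo Γ I (g p) = Finsupp.single p 1 + d p + e p := by
      intro p
      rw [hg]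
      simp only [map_add, map_sub]
      rw [bdryTwo]
      simp only [Finsupp.linearCombination_single, one_smul]
      rw [hd, he]
      simp only [Prod.mk.eta]
      abel
    have key : bdryTwo Γ I (Finsupp.linearCombination ℝ g b)
        = b + Finsupp.linearCombination ℝ d b + Finsupp.linearCombination ℝ e b := by
      rw [Finsupp.apply_linearCombination]
      have : (⇑(bdryTwo Γ I)) ∘ g = fun p => Finsupp.single p 1 + d p + e p :=
        funext hbd
      rw [this]
      simp only [Finsupp.linearCombination_apply]
      rw [show (fun (p : (Γ × I) × (Γ × I)) (c : ℝ) =>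
            c • (Finsupp.single p 1 + d p + e p))
          = fun p c => (c • Finsupp.single p 1 + c • d p) + c • e p by
            funext p c; rw [smul_add, smul_add]]
      rw [Finsupp.sum_add, Finsupp.sum_add]
      congr 1
      congr 1
      conv_rhs => rw [← Finsupp.sum_single b]
      exact Finsupp.sum_congr fun p _ => by
        rw [Finsupp.smul_single, smul_eq_mul, mul_one]
    have he0 : Finsupp.linearCombination ℝ e b = 0 := by
      have hcomp : e = (⇑(-L)) ∘ (fun p : (Γ × I) × (Γ × I) =>
          Finsupp.single (cosetProj H p.2) (1 : ℝ)
            - Finsupp.single (cosetProj H p.1) (1 : ℝ)) := by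
        funext p
        simp only [Function.comp_apply, LinearMap.neg_apply, map_sub, hL,
          Finsupp.lmapDomain_apply, Finsupp.mapDomain_single, he]
        abel
      rw [hcomp, ← Finsupp.apply_linearCombination]
      have : Finsupp.linearCombination ℝ (fun p : (Γ × I) × (Γ × I) =>
          Finsupp.single (cosetProj H p.2) (1 : ℝ)
            - Finsupp.single (cosetProj H p.1) (1 : ℝ)) b = 0 := hcycle
      rw [this, map_zero]
    have hdmem : Finsupp.linearCombination ℝ d b ∈ degenPairs H := by
      rw [Finsupp.linearCombination_apply, Finsupp.sum]
      refine Submodule.sum_mem _ fun p _ => Submodule.smul_mem _ _ ?_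
      refine sub_mem ?_ ?_
      · exact Submodule.subset_span ⟨(r (cosetProj H p.1), p.1), by rw [hπr], rfl⟩
      · exact Submodule.subset_span ⟨(r (cosetProj H p.2), p.2), by rw [hπr], rfl⟩
    rw [key, he0, add_zero, add_sub_cancel_left]
    exact hdmem
  · -- norm estimate
    refine le_trans (l1Norm_filter_le _ _) ?_
    calc l1Norm (Finsupp.linearCombination ℝ g b)
        = l1Norm (∑ p ∈ b.support, b p • g p) := by
          rw [Finsupp.linearCombination_apply, Finsupp.sum]
      _ ≤ ∑ p ∈ b.support, l1Norm (b p • g p) := l1Norm_finset_sum_le _ _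
      _ ≤ ∑ p ∈ b.support, 3 * |b p| := by
          refine Finset.sum_le_sum fun p _ => ?_
          rw [hg]
          simp only [smul_sub, smul_add, Finsupp.smul_single, smul_eq_mul, mul_one]
          calc l1Norm _ ≤ l1Norm (Finsupp.single (x, p.1, p.2) (b p)
                  + Finsupp.single (x, r (cosetProj H p.1), p.1) (b p))
                + l1Norm (Finsupp.single (x, r (cosetProj H p.2), p.2) (b p)) :=
              l1Norm_sub_le _ _
            _ ≤ (l1Norm (Finsupp.single (x, p.1, p.2) (b p))
                  + l1Norm (Finsupp.single (x, r (cosetProj H p.1), p.1) (b p)))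
                + l1Norm (Finsupp.single (x, r (cosetProj H p.2), p.2) (b p)) := by
              have := l1Norm_add_le (Finsupp.single (x, p.1, p.2) (b p))
                (Finsupp.single (x, r (cosetProj H p.1), p.1) (b p))
              linarith
            _ ≤ |b p| + |b p| + |b p| := by
              have h1 := l1Norm_single_le (x, p.1, p.2) (b p)
              have h2 := l1Norm_single_le (x, r (cosetProj H p.1), p.1) (b p)
              have h3 := l1Norm_single_le (x, r (cosetProj H p.2), p.2) (b p)
              linarith
            _ = 3 * |b p| := by ring
      _ = 3 * l1Norm b := by rw [l1Norm, Finset.mul_sum]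
end

section
/- Let α and β be types and d : β → (α →₀ ℚ) a function. Let D_ℚ : (β →₀ ℚ) → (α →₀ ℚ) be the unique ℚ-linear map with D_ℚ(single b) = d(b) for every b ∈ β, and let D_ℝ : (β →₀ ℝ) → (α →₀ ℝ) be the unique ℝ-linear map with D_ℝ(single b) equal to the coefficientwise real coercion of d(b). Let γ : α →₀ ℚ be such that its real coercion γ_ℝ lies in the range of D_ℝ. Then γ lies in the range of D_ℚ, and inf{‖μ‖₁ : μ : β →₀ ℝ, D_ℝ(μ) = γ_ℝ} = inf{‖ν‖₁ : ν : β →₀ ℚ, D_ℚ(ν) = γ}, where for a rational finitely supported function ν the quantity ‖ν‖₁ is the real number ∑_{b ∈ support(ν)} |ν(b)|. -/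
/-- The rational boundary map determined by `d : β → (α →₀ ℚ)`. -/
noncomputable def DQ {α β : Type} (d : β → (α →₀ ℚ)) : (β →₀ ℚ) →ₗ[ℚ] (α →₀ ℚ) :=
  Finsupp.linearCombination ℚ d

/-- The real boundary map determined by `d : β → (α →₀ ℚ)`, obtained by coercing
coefficients to `ℝ`. -/
noncomputable def DR {α β : Type} (d : β → (α →₀ ℚ)) : (β →₀ ℝ) →ₗ[ℝ] (α →₀ ℝ) :=
  Finsupp.linearCombination ℝ fun b =>
    (d b).mapRange (fun q : ℚ => (q : ℝ)) (by norm_num)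

namespace RatRealAux

noncomputable def e {ι : Type} : (ι →₀ ℚ) →ₗ[ℚ] (ι →₀ ℝ) :=
  Finsupp.mapRange.linearMap (Algebra.linearMap ℚ ℝ)

@[simp] lemma e_apply {ι : Type} (x : ι →₀ ℚ) (i : ι) : e x i = (x i : ℝ) := rfl

lemma e_eq {ι : Type} {h : (fun q : ℚ => (q : ℝ)) 0 = 0} (x : ι →₀ ℚ) :
    x.mapRange (fun q : ℚ => (q : ℝ)) h = e x := rfl

@[simp] lemma e_single {ι : Type} (i : ι) (q : ℚ) :
    e (Finsupp.single i q) = Finsupp.single i (q : ℝ) := by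
  classical
  ext j; rw [e_apply, Finsupp.single_apply, Finsupp.single_apply]; split <;> simp

@[simp] lemma support_e {ι : Type} (x : ι →₀ ℚ) : (e x).support = x.support :=
  Finsupp.support_mapRange_of_injective (by norm_num) x (fun a b h => Rat.cast_injective h)

lemma rat_smul_e {ι : Type} (q : ℚ) (v : ι →₀ ℝ) : q • v = (q : ℝ) • v := by
  ext i; simp [Rat.smul_def]

lemma DR_e {α β : Type} (d : β → (α →₀ ℚ)) (ν : β →₀ ℚ) : DR d (e ν) = e (DQ d ν) := by
  induction ν using Finsupp.induction_linear with
  | zero => simp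
  | add f g hf hg => simp only [map_add, hf, hg]
  | single b q =>
      rw [e_single]
      simp only [DR, DQ, Finsupp.linearCombination_single, e_eq]
      rw [map_smul, rat_smul_e]

noncomputable def extDual {α : Type} (φ : (α →₀ ℚ) →ₗ[ℚ] ℚ) : (α →₀ ℝ) →ₗ[ℝ] ℝ :=
  Finsupp.linearCombination ℝ (fun a => (φ (Finsupp.single a 1) : ℝ))

lemma extDual_e {α : Type} (φ : (α →₀ ℚ) →ₗ[ℚ] ℚ) (y : α →₀ ℚ) :
    extDual φ (e y) = (φ y : ℝ) := by
  induction y using Finsupp.induction_linear with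
  | zero => simp
  | add f g hf hg => simp only [map_add, hf, hg]; push_cast; ring
  | single a q =>
      rw [e_single]
      have : Finsupp.single a q = q • Finsupp.single a (1 : ℚ) := by
        rw [Finsupp.smul_single, smul_eq_mul, mul_one]
      rw [this, map_smul, smul_eq_mul]
      have : Finsupp.single a (q : ℝ) = (q : ℝ) • Finsupp.single a (1 : ℝ) := by
        rw [Finsupp.smul_single, smul_eq_mul, mul_one]
      rw [this, map_smul, smul_eq_mul]
      simp [extDual, Finsupp.linearCombination_single]

lemma mem_range_DQ {α β : Type} (d : β → (α →₀ ℚ)) (γ : α →₀ ℚ)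
    (h : e γ ∈ LinearMap.range (DR d)) : γ ∈ LinearMap.range (DQ d) := by
  by_contra hγ
  obtain ⟨φ, hφx, hφp⟩ :=
    Submodule.exists_dual_map_eq_bot_of_notMem (p := LinearMap.range (DQ d)) hγ inferInstance
  have hkill : ∀ y ∈ LinearMap.range (DQ d), φ y = 0 := by
    intro y hy
    have : φ y ∈ (LinearMap.range (DQ d)).map φ := Submodule.mem_map_of_mem hy
    rwa [hφp, Submodule.mem_bot] at this
  -- extDual φ kills range of DR d
  have hcomp : ∀ μ : β →₀ ℝ, extDual φ (DR d μ) = 0 := by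
    have : (extDual φ).comp (DR d) = 0 := by
      apply Finsupp.lhom_ext'
      intro b
      ext
      simp only [LinearMap.comp_apply, LinearMap.zero_comp, LinearMap.zero_apply,
        Finsupp.lsingle_apply]
      have h2 : (Finsupp.single b (1:ℝ)) = e (Finsupp.single b (1:ℚ)) := by
        rw [e_single, Rat.cast_one]
      rw [h2, DR_e d, extDual_e]
      have := hkill (DQ d (Finsupp.single b 1)) ⟨_, rfl⟩
      rw [this]; norm_num
    intro μ
    have := congrArg (fun f => f μ) this
    simpa using this
  obtain ⟨μ, hμ⟩ := h
  have h1 : extDual φ (e γ) = 0 := by rw [← hμ]; exact hcomp μ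
  rw [extDual_e] at h1
  exact hφx (by exact_mod_cast h1)

lemma ker_aux {α β : Type} (d : β → (α →₀ ℚ)) (S : Finset β) :
    ∀ k : β →₀ ℝ, k.support ⊆ S → DR d k = 0 →
      k ∈ Submodule.span ℝ (e '' (LinearMap.ker (DQ d) : Set (β →₀ ℚ))) := by
  classical
  induction S using Finset.strongInduction with
  | _ S ih =>
    intro k hkS hk0
    by_cases hc : ∃ κ : β →₀ ℚ, DQ d κ = 0 ∧ κ ≠ 0 ∧ κ.support ⊆ S
    · obtain ⟨κ, hκ0, hκne, hκS⟩ := hc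
      obtain ⟨b₀, hb₀⟩ := Finsupp.support_nonempty_iff.mpr hκne
      have hb₀ne : (κ b₀ : ℝ) ≠ 0 := by
        exact_mod_cast Finsupp.mem_support_iff.mp hb₀
      set c : ℝ := k b₀ / (κ b₀ : ℝ) with hc_def
      set k' : β →₀ ℝ := k - c • e κ with hk'_def
      have hb₀S : b₀ ∈ S := hκS hb₀
      have hk'b₀ : k' b₀ = 0 := by
        simp only [hk'_def, Finsupp.sub_apply, Finsupp.smul_apply, e_apply, hc_def,
          smul_eq_mul]
        field_simp; ring
      have hk'supp : k'.support ⊆ S.erase b₀ := by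
        intro b hb
        have hbne : k' b ≠ 0 := Finsupp.mem_support_iff.mp hb
        rw [Finset.mem_erase]
        constructor
        · rintro rfl; exact hbne hk'b₀
        · by_contra hbS
          apply hbne
          have hkb : k b = 0 := by
            by_contra h'; exact hbS (hkS (Finsupp.mem_support_iff.mpr h'))
          have hκb : κ b = 0 := by
            by_contra h'; exact hbS (hκS (Finsupp.mem_support_iff.mpr h'))
          simp [hk'_def, hkb, hκb]
      have hk'0 : DR d k' = 0 := by
        rw [hk'_def, map_sub, map_smul, DR_e, hκ0, hk0]; simp
      have hmem := ih (S.erase b₀) (Finset.erase_ssubset hb₀S) k' hk'supp hk'0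
      have hrw : k = k' + c • e κ := by rw [hk'_def, sub_add_cancel]
      rw [hrw]
      refine Submodule.add_mem _ hmem (Submodule.smul_mem _ _ (Submodule.subset_span ?_))
      exact ⟨κ, by simpa [LinearMap.mem_ker] using hκ0, rfl⟩
    · push_neg at hc
      have hz : ∀ b₀ ∈ S, k b₀ = 0 := by
        intro b₀ hb₀S
        have hnot : d b₀ ∉ Submodule.span ℚ (d '' ↑(S.erase b₀)) := by
          intro hmem
          rw [Finsupp.mem_span_image_iff_linearCombination] at hmem
          obtain ⟨cf, hcsupp, hcsum⟩ := hmem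
          set κ : β →₀ ℚ := Finsupp.single b₀ 1 - cf with hκdef
          have h1 : DQ d κ = 0 := by
            rw [hκdef, map_sub]
            rw [show (DQ d) cf = d b₀ from hcsum]
            simp [DQ, Finsupp.linearCombination_single]
          have hcb₀ : cf b₀ = 0 := by
            by_contra h'
            have := (Finsupp.mem_supported' _ _).mp hcsupp b₀ ?_
            · exact h' this
            · intro hmem'
              exact (Finset.mem_erase.mp hmem').1 rfl
          have h2 : κ ≠ 0 := by
            intro h'
            have : κ b₀ = 0 := by rw [h']; rfl
            rw [hκdef] at this
            simp [hcb₀] at this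
          have h3 : κ.support ⊆ S := by
            intro b hb
            have := Finsupp.support_sub (f := Finsupp.single b₀ (1:ℚ)) (g := cf) hb
            rcases Finset.mem_union.mp this with h | h
            · rw [Finset.mem_singleton.mp (Finsupp.support_single_subset h)]
              exact hb₀S
            · exact Finset.mem_of_mem_erase
                ((Finsupp.mem_supported _ _).mp hcsupp h)
          exact hc κ h1 h2 h3
        obtain ⟨φ, hφx, hφp⟩ :=
          Submodule.exists_dual_map_eq_bot_of_notMem hnot inferInstance
        have hkill : ∀ b ∈ S.erase b₀, φ (d b) = 0 := by
          intro b hb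
          have : φ (d b) ∈ (Submodule.span ℚ (d '' ↑(S.erase b₀))).map φ :=
            Submodule.mem_map_of_mem (Submodule.subset_span ⟨b, Finset.mem_coe.mpr hb, rfl⟩)
          rwa [hφp, Submodule.mem_bot] at this
        have hsum : (0:ℝ) = ∑ b ∈ k.support, k b * (φ (d b) : ℝ) := by
          have h0 : extDual φ (DR d k) = 0 := by rw [hk0]; simp
          rw [DR, Finsupp.linearCombination_apply, Finsupp.sum, map_sum] at h0
          rw [← h0]
          refine Finset.sum_congr rfl fun b _ => ?_
          rw [map_smul, e_eq, extDual_e, smul_eq_mul]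
        have hterm : ∀ b ∈ k.support, b ≠ b₀ → k b * (φ (d b) : ℝ) = 0 := by
          intro b hb hne
          rw [hkill b (Finset.mem_erase.mpr ⟨hne, hkS hb⟩)]
          simp
        have hzz : (0:ℝ) = k b₀ * (φ (d b₀) : ℝ) := by
          rw [hsum, Finset.sum_eq_single b₀ hterm
            (fun h => by rw [Finsupp.notMem_support_iff.mp h]; ring)]
        have hφne : ((φ (d b₀) : ℚ) : ℝ) ≠ 0 := by exact_mod_cast hφx
        rcases mul_eq_zero.mp hzz.symm with h | h
        · exact h
        · exact absurd h hφne
      have : k = 0 := by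
        ext b
        by_cases hb : b ∈ S
        · exact hz b hb
        · by_contra h'
          exact hb (hkS (Finsupp.mem_support_iff.mpr h'))
      rw [this]; exact Submodule.zero_mem _

lemma sum_abs_le_support {β : Type} (x : β →₀ ℝ) (T : Finset β) :
    ∑ b ∈ T, |x b| ≤ ∑ b ∈ x.support, |x b| := by
  classical
  have hz : ∀ b, b ∉ x.support → |x b| = 0 := fun b hb => by
    rw [Finsupp.notMem_support_iff.mp hb, abs_zero]
  calc ∑ b ∈ T, |x b| ≤ ∑ b ∈ T ∪ x.support, |x b| :=
        Finset.sum_le_sum_of_subset_of_nonneg Finset.subset_union_left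
          (fun _ _ _ => abs_nonneg _)
    _ = ∑ b ∈ x.support, |x b| :=
        (Finset.sum_subset Finset.subset_union_right (fun b _ hb => hz b hb)).symm

lemma sum_abs_eq_of_subset {β : Type} (x : β →₀ ℝ) (T : Finset β) (h : x.support ⊆ T) :
    ∑ b ∈ T, |x b| = ∑ b ∈ x.support, |x b| := by
  have hz : ∀ b, b ∉ x.support → |x b| = 0 := fun b hb => by
    rw [Finsupp.notMem_support_iff.mp hb, abs_zero]
  exact (Finset.sum_subset h (fun b _ hb => hz b hb)).symm

lemma approx {α β : Type} (d : β → (α →₀ ℚ)) (γ : α →₀ ℚ)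
    (hQ : γ ∈ LinearMap.range (DQ d)) (μ : β →₀ ℝ) (hμ : DR d μ = e γ)
    (ε : ℝ) (hε : 0 < ε) :
    ∃ ν : β →₀ ℚ, DQ d ν = γ ∧
      ∑ b ∈ ν.support, |(ν b : ℝ)| ≤ ∑ b ∈ μ.support, |μ b| + ε := by
  classical
  obtain ⟨ν₀, hν₀⟩ := hQ
  have hker : DR d (μ - e ν₀) = 0 := by rw [map_sub, DR_e, hν₀, hμ, sub_self]
  have hsp := ker_aux d (μ - e ν₀).support (μ - e ν₀) subset_rfl hker
  rw [Submodule.mem_span_set'] at hsp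
  obtain ⟨n, r, g, hg⟩ := hsp
  choose κ hκker hκeq using fun i => (g i).2
  set C : ℝ := ∑ i, ∑ b ∈ (κ i).support, |((κ i) b : ℝ)| with hCdef
  have hC0 : 0 ≤ C :=
    Finset.sum_nonneg fun i _ => Finset.sum_nonneg fun b _ => abs_nonneg _
  set δ : ℝ := ε / (C + 1) with hδdef
  have hδ : 0 < δ := div_pos hε (by linarith)
  choose q hq using fun i => exists_rat_near (K := ℝ) (r i) hδ
  set ν : β →₀ ℚ := ν₀ + ∑ i, q i • κ i with hνdef
  refine ⟨ν, ?_, ?_⟩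
  · rw [hνdef, map_add, map_sum, hν₀]
    have : ∀ i : Fin n, DQ d (q i • κ i) = 0 := fun i => by
      rw [map_smul, LinearMap.mem_ker.mp (hκker i), smul_zero]
    rw [Finset.sum_congr rfl (fun i _ => this i), Finset.sum_const_zero, add_zero]
  · -- key identity
    have hkey : e ν - μ = ∑ i, ((q i : ℝ) - r i) • e (κ i) := by
      have h1 : e ν = e ν₀ + ∑ i, (q i : ℝ) • e (κ i) := by
        rw [hνdef, map_add, map_sum]
        congr 1
        refine Finset.sum_congr rfl fun i _ => ?_
        rw [map_smul, rat_smul_e]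
      have h2 : μ = e ν₀ + ∑ i, r i • e (κ i) := by
        have : ∑ i, r i • e (κ i) = μ - e ν₀ := by
          rw [← hg]
          exact Finset.sum_congr rfl fun i _ => by rw [hκeq]
        rw [this]; abel
      rw [h1, h2]
      rw [show ∀ (a x y : β →₀ ℝ), a + x - (a + y) = x - y from fun a x y => by abel]
      rw [← Finset.sum_sub_distrib]
      exact Finset.sum_congr rfl fun i _ => by rw [sub_smul]
    set T : Finset β := (e ν).support ∪ μ.support with hTdef
    have hA1 : ∑ b ∈ ν.support, |((ν : β →₀ ℚ) b : ℝ)| = ∑ b ∈ T, |(e ν) b| := by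
      rw [sum_abs_eq_of_subset (e ν) T Finset.subset_union_left, support_e]
      exact Finset.sum_congr rfl fun b _ => by rw [e_apply]
    have hA2 : ∑ b ∈ T, |(e ν) b| ≤ ∑ b ∈ T, |μ b| + ∑ b ∈ T, |(e ν - μ) b| := by
      rw [← Finset.sum_add_distrib]
      refine Finset.sum_le_sum fun b _ => ?_
      have : (e ν) b = μ b + (e ν - μ) b := by simp
      rw [this]
      exact abs_add_le _ _
    have hA3 : ∑ b ∈ T, |μ b| = ∑ b ∈ μ.support, |μ b| :=
      sum_abs_eq_of_subset μ T Finset.subset_union_right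
    have hA4 : ∑ b ∈ T, |(e ν - μ) b| ≤ ε := by
      have hpt : ∀ b ∈ T, |(e ν - μ) b| ≤ ∑ i, |(q i : ℝ) - r i| * |(e (κ i)) b| := by
        intro b _
        rw [hkey, Finsupp.finset_sum_apply]
        refine (Finset.abs_sum_le_sum_abs _ _).trans ?_
        refine Finset.sum_le_sum fun i _ => ?_
        rw [Finsupp.smul_apply, smul_eq_mul, abs_mul]
      calc ∑ b ∈ T, |(e ν - μ) b| ≤ ∑ b ∈ T, ∑ i, |(q i : ℝ) - r i| * |(e (κ i)) b| :=
            Finset.sum_le_sum hpt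
        _ = ∑ i, ∑ b ∈ T, |(q i : ℝ) - r i| * |(e (κ i)) b| := Finset.sum_comm
        _ = ∑ i, |(q i : ℝ) - r i| * ∑ b ∈ T, |(e (κ i)) b| := by
            exact Finset.sum_congr rfl fun i _ => (Finset.mul_sum _ _ _).symm
        _ ≤ ∑ i, δ * ∑ b ∈ (κ i).support, |((κ i) b : ℝ)| := by
            refine Finset.sum_le_sum fun i _ => ?_
            have h1 : |(q i : ℝ) - r i| ≤ δ := by
              rw [abs_sub_comm]; exact (hq i).le
            have h2 : ∑ b ∈ T, |(e (κ i)) b| ≤ ∑ b ∈ (κ i).support, |((κ i) b : ℝ)| := by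
              have := sum_abs_le_support (e (κ i)) T
              rwa [support_e, Finset.sum_congr rfl
                (fun b _ => by rw [e_apply] : ∀ b ∈ (κ i).support, |(e (κ i)) b| = |((κ i) b : ℝ)|)] at this
            have h3 : 0 ≤ ∑ b ∈ T, |(e (κ i)) b| :=
              Finset.sum_nonneg fun b _ => abs_nonneg _
            exact mul_le_mul h1 h2 h3 hδ.le
        _ = δ * C := by rw [hCdef, Finset.mul_sum]
        _ ≤ δ * (C + 1) := by nlinarith
        _ = ε := by rw [hδdef]; field_simp
    rw [hA1]
    calc ∑ b ∈ T, |(e ν) b| ≤ ∑ b ∈ T, |μ b| + ∑ b ∈ T, |(e ν - μ) b| := hA2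
      _ ≤ ∑ b ∈ μ.support, |μ b| + ε := by rw [hA3]; linarith

end RatRealAux

open RatRealAux

/-- rational and real filling norms coincide: if the real coercion of a
rational chain `γ` bounds over `ℝ`, then `γ` bounds over `ℚ`, and the real and rational
filling (ℓ¹) norms of `γ` agree. -/
theorem rat_real_filling_norms_eq {α β : Type} (d : β → (α →₀ ℚ)) (γ : α →₀ ℚ)
    (h : γ.mapRange (fun q : ℚ => (q : ℝ)) (by norm_num) ∈ LinearMap.range (DR d)) :
    γ ∈ LinearMap.range (DQ d) ∧
    sInf {x : ℝ | ∃ μ : β →₀ ℝ,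
        DR d μ = γ.mapRange (fun q : ℚ => (q : ℝ)) (by norm_num) ∧
        x = ∑ b ∈ μ.support, |μ b|}
      = sInf {x : ℝ | ∃ ν : β →₀ ℚ, DQ d ν = γ ∧ x = ∑ b ∈ ν.support, |(ν b : ℝ)|} := by
  classical
  have h' : e γ ∈ LinearMap.range (DR d) := h
  have part1 : γ ∈ LinearMap.range (DQ d) := mem_range_DQ d γ h'
  refine ⟨part1, ?_⟩
  show sInf {x : ℝ | ∃ μ : β →₀ ℝ, DR d μ = e γ ∧ x = ∑ b ∈ μ.support, |μ b|}
      = sInf {x : ℝ | ∃ ν : β →₀ ℚ, DQ d ν = γ ∧ x = ∑ b ∈ ν.support, |(ν b : ℝ)|}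
  set A := {x : ℝ | ∃ μ : β →₀ ℝ, DR d μ = e γ ∧ x = ∑ b ∈ μ.support, |μ b|} with hA
  set B := {x : ℝ | ∃ ν : β →₀ ℚ, DQ d ν = γ ∧ x = ∑ b ∈ ν.support, |(ν b : ℝ)|} with hB
  have hBA : B ⊆ A := by
    rintro x ⟨ν, hν, rfl⟩
    refine ⟨e ν, by rw [DR_e, hν], ?_⟩
    rw [support_e]
    exact Finset.sum_congr rfl fun b _ => by rw [e_apply]
  have hBne : B.Nonempty := by
    obtain ⟨ν₀, hν₀⟩ := part1
    exact ⟨_, ν₀, hν₀, rfl⟩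
  have hAne : A.Nonempty := hBne.mono hBA
  have hAbdd : BddBelow A := by
    refine ⟨0, fun x hx => ?_⟩
    obtain ⟨μ, _, rfl⟩ := hx
    exact Finset.sum_nonneg fun b _ => abs_nonneg _
  have hBbdd : BddBelow B := by
    refine ⟨0, fun x hx => ?_⟩
    obtain ⟨ν, _, rfl⟩ := hx
    exact Finset.sum_nonneg fun b _ => abs_nonneg _
  have h1 : sInf A ≤ sInf B := csInf_le_csInf hAbdd hBne hBA
  have h2 : sInf B ≤ sInf A := by
    refine le_csInf hAne ?_
    rintro x ⟨μ, hμ, rfl⟩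
    refine le_of_forall_pos_le_add fun ε hε => ?_
    obtain ⟨ν, hν, hle⟩ := approx d γ part1 μ hμ ε hε
    exact (csInf_le hBbdd ⟨ν, hν, rfl⟩).trans hle
  exact le_antisymm h1 h2
end

section
/- Let (X, d) be a metric space, let p ≥ 1, let x₁, …, x_p ∈ X, and let r > 0. Then there exist a nonempty subset I ⊆ {1, …, p} and a real number R' with r ≤ R' ≤ 3^p · r such that the closed balls B(x_i, R') for i ∈ I are pairwise disjoint and ⋃_{i=1}^p B(x_i, r) ⊆ ⋃_{i∈I} B(x_i, R'). -/
private lemma merge_aux {X : Type} [MetricSpace X] {p : ℕ} (x : Fin p → X) {r : ℝ}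
    (hr : 0 < r) :
    ∀ n (I : Finset (Fin p)), I.card ≤ n → I.Nonempty → ∀ R : ℝ, r ≤ R →
    ∃ (J : Finset (Fin p)) (R' : ℝ), J ⊆ I ∧ J.Nonempty ∧ R ≤ R' ∧ R' ≤ 3 ^ (n - 1) * R ∧
      (∀ i ∈ J, ∀ j ∈ J, i ≠ j →
        Disjoint (Metric.closedBall (x i) R') (Metric.closedBall (x j) R')) ∧
      (⋃ i ∈ I, Metric.closedBall (x i) R) ⊆ ⋃ i ∈ J, Metric.closedBall (x i) R' := by
  intro n
  induction n with
  | zero =>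
    intro I hcard hne R hR
    exact absurd (Finset.card_eq_zero.mp (Nat.le_zero.mp hcard)) (Finset.nonempty_iff_ne_empty.mp hne)
  | succ n ih =>
    intro I hcard hne R hR
    have hR0 : 0 < R := lt_of_lt_of_le hr hR
    by_cases hdisj : ∀ i ∈ I, ∀ j ∈ I, i ≠ j →
        Disjoint (Metric.closedBall (x i) R) (Metric.closedBall (x j) R)
    · refine ⟨I, R, subset_rfl, hne, le_rfl, ?_, hdisj, subset_rfl⟩
      calc R = 1 * R := (one_mul R).symm
        _ ≤ 3 ^ n * R := by
          apply mul_le_mul_of_nonneg_right _ hR0.le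
          exact one_le_pow₀ (by norm_num)
    · push_neg at hdisj
      obtain ⟨i, hi, j, hj, hij, hnd⟩ := hdisj
      -- balls at x i and x j of radius R intersect, so B(x j, R) ⊆ B(x i, 3R)
      rw [Set.not_disjoint_iff] at hnd
      obtain ⟨y, hyi, hyj⟩ := hnd
      have hdij : dist (x i) (x j) ≤ 2 * R := by
        calc dist (x i) (x j) ≤ dist (x i) y + dist y (x j) := dist_triangle _ _ _
          _ ≤ R + R := add_le_add (by simpa [dist_comm] using hyi)
              (by simpa [dist_comm] using hyj)
          _ = 2 * R := by ring
      have hsub : Metric.closedBall (x j) R ⊆ Metric.closedBall (x i) (3 * R) := by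
        intro z hz
        simp only [Metric.mem_closedBall] at hz ⊢
        calc dist z (x i) ≤ dist z (x j) + dist (x j) (x i) := dist_triangle _ _ _
          _ ≤ R + 2 * R := add_le_add hz (by simpa [dist_comm] using hdij)
          _ = 3 * R := by ring
      -- n ≥ 1 since I has two distinct elements
      have hn1 : 1 ≤ n := by
        rcases Nat.eq_zero_or_pos n with h0 | h; swap; · exact h
        exfalso
        subst h0
        have : I.card ≤ 1 := hcard
        have := Finset.card_le_one.mp this i hi j hj
        exact hij this
      set I' := I.erase j with hI'
      have hI'card : I'.card ≤ n := by
        show (I.erase j).card ≤ n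
        have h1 := Finset.card_erase_of_mem hj
        have h2 : 1 ≤ I.card := Finset.card_pos.mpr hne
        omega
      obtain ⟨J, R', hJI, hJne, hRR', hR'le, hJd, hJcov⟩ :=
        ih I' hI'card ⟨i, Finset.mem_erase.mpr ⟨hij, hi⟩⟩ (3 * R)
          (le_trans hR (by linarith))
      refine ⟨J, R', hJI.trans (Finset.erase_subset _ _), hJne, by linarith, ?_, hJd, ?_⟩
      · calc R' ≤ 3 ^ (n - 1) * (3 * R) := hR'le
          _ = 3 ^ (n - 1) * 3 * R := by ring
          _ = 3 ^ n * R := by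
            congr 1
            rw [← pow_succ]
            congr 1
            omega
          _ = 3 ^ (n + 1 - 1) * R := by norm_num
      · intro z hz
        apply hJcov
        simp only [Set.mem_iUnion] at hz ⊢
        obtain ⟨k, hk, hzk⟩ := hz
        by_cases hkj : k = j
        · exact ⟨i, Finset.mem_erase.mpr ⟨hij, hi⟩, hsub (hkj ▸ hzk)⟩
        · refine ⟨k, Finset.mem_erase.mpr ⟨hkj, hk⟩, ?_⟩
          exact Metric.closedBall_subset_closedBall (by linarith) hzk

/-- ball merging: given `p ≥ 1` points in a metric space and `r > 0`, there
are a nonempty subset `I` of the indices and a radius `R'` with `r ≤ R' ≤ 3^p · r` such that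
the closed balls of radius `R'` around the points indexed by `I` are pairwise disjoint and
cover the union of the original balls of radius `r`. -/
theorem exists_disjoint_cover_balls {X : Type} [MetricSpace X]
    (p : ℕ) (hp : 1 ≤ p) (x : Fin p → X) (r : ℝ) (hr : 0 < r) :
    ∃ (I : Finset (Fin p)) (R' : ℝ), I.Nonempty ∧ r ≤ R' ∧ R' ≤ 3 ^ p * r ∧
      (∀ i ∈ I, ∀ j ∈ I, i ≠ j →
        Disjoint (Metric.closedBall (x i) R') (Metric.closedBall (x j) R')) ∧
      (⋃ i, Metric.closedBall (x i) r) ⊆ ⋃ i ∈ I, Metric.closedBall (x i) R' := by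
  have : Nonempty (Fin p) := ⟨⟨0, hp⟩⟩
  obtain ⟨J, R', hJ, hJne, hRR', hR'le, hJd, hJcov⟩ :=
    merge_aux x hr p Finset.univ (by simp)
      Finset.univ_nonempty r le_rfl
  refine ⟨J, R', hJne, hRR', ?_, hJd, ?_⟩
  · calc R' ≤ 3 ^ (p - 1) * r := hR'le
      _ ≤ 3 ^ p * r := by
        apply mul_le_mul_of_nonneg_right _ hr.le
        exact pow_le_pow_right₀ (by norm_num) (Nat.sub_le p 1)
  · intro z hz
    apply hJcov
    simp only [Set.mem_iUnion] at hz ⊢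
    obtain ⟨k, hzk⟩ := hz
    exact ⟨k, Finset.mem_univ k, hzk⟩
end

section
/- Let δ > 0 and let X be a geodesic metric space in which every geodesic triangle is δ-slim. Let v₁, v₂, v₃ ∈ X, let σ₁₂, σ₁₃, σ₂₃ be geodesic segments joining v₁v₂, v₁v₃, v₂v₃ respectively, and let x be a point on σ₁₂ with d(x, σ₁₃) ≤ δ and d(x, σ₂₃) ≤ δ. Let R ≥ 10δ, and let τ be a geodesic segment from x to v₃. For i = 1, 2 let v_i' be the point of σ₁₂ on the subsegment from x to v_i at distance R from x (when d(x, v_i) ≥ R), and let v₃' be the point of τ at distance R from x (when d(x, v₃) ≥ R); let γ_i denote the subsegment from v_i' to v_i of the corresponding geodesic (γ_i := ∅ when d(x, v_i) < R). Then: (a) d(v_i', v_j') ≥ 2R − 6δ for all i ≠ j for which both points are defined; (b) σ₁₂ ∪ σ₁₃ ∪ σ₂₃ ⊆ B(x, R + δ) ∪ N_δ(γ₁) ∪ N_δ(γ₂) ∪ N_δ(γ₃). -/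
/-- The closed `r`-neighborhood of a subset of a metric space (empty if `A` is empty). -/
def cnbhd {X : Type*} [MetricSpace X] (r : ℝ) (A : Set X) : Set X :=
  {x | ∃ a ∈ A, dist x a ≤ r}

/-- `γ` is (the image of) a geodesic segment from `x` to `y`. -/
def IsGeodesicFrom {X : Type*} [MetricSpace X] (γ : Set X) (x y : X) : Prop :=
  ∃ f : ℝ → X, f 0 = x ∧ f (dist x y) = y ∧
    (∀ s ∈ Set.Icc (0 : ℝ) (dist x y), ∀ t ∈ Set.Icc (0 : ℝ) (dist x y),
      dist (f s) (f t) = |s - t|) ∧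
    γ = f '' Set.Icc (0 : ℝ) (dist x y)

/-- A metric space is geodesic if every two points are joined by a geodesic segment. -/
def GeodesicSpace (X : Type*) [MetricSpace X] : Prop :=
  ∀ x y : X, ∃ γ : Set X, IsGeodesicFrom γ x y

/-- Every geodesic triangle of `X` is `δ`-slim. -/
def SlimTriangles (X : Type*) [MetricSpace X] (δ : ℝ) : Prop :=
  ∀ (x y z : X) (A B C : Set X),
    IsGeodesicFrom A x y → IsGeodesicFrom B y z → IsGeodesicFrom C x z →
      A ⊆ cnbhd δ (B ∪ C) ∧ B ⊆ cnbhd δ (A ∪ C) ∧ C ⊆ cnbhd δ (A ∪ B)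

/-- tripod decomposition of a slim triangle: with `x` an internal point of
the side `σ₁₂` that is `δ`-close to the two other sides, `R ≥ 10δ`, `v_i'` the points at
distance `R` from `x` towards the vertices and `γ_i` the corresponding terminal subsegments,
one has (a) `d(v_i', v_j') ≥ 2R − 6δ` whenever defined, and (b) the triangle is contained in
`B(x, R+δ) ∪ N_δ(γ₁) ∪ N_δ(γ₂) ∪ N_δ(γ₃)`. -/
theorem slim_triangle_tripod_decomposition {X : Type} [MetricSpace X]
    (δ : ℝ) (hδ : 0 < δ) (geo : GeodesicSpace X) (slim : SlimTriangles X δ)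
    (v₁ v₂ v₃ : X)
    (f : ℝ → X) (hf0 : f 0 = v₁) (hf1 : f (dist v₁ v₂) = v₂)
    (hfiso : ∀ s ∈ Set.Icc (0 : ℝ) (dist v₁ v₂), ∀ t ∈ Set.Icc (0 : ℝ) (dist v₁ v₂),
      dist (f s) (f t) = |s - t|)
    (σ₁₂ : Set X) (hσ₁₂ : σ₁₂ = f '' Set.Icc (0 : ℝ) (dist v₁ v₂))
    (σ₁₃ σ₂₃ : Set X) (hσ₁₃ : IsGeodesicFrom σ₁₃ v₁ v₃) (hσ₂₃ : IsGeodesicFrom σ₂₃ v₂ v₃)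
    (t₀ : ℝ) (ht₀ : t₀ ∈ Set.Icc (0 : ℝ) (dist v₁ v₂))
    (x : X) (hx : x = f t₀)
    (hx13 : x ∈ cnbhd δ σ₁₃) (hx23 : x ∈ cnbhd δ σ₂₃)
    (R : ℝ) (hR : 10 * δ ≤ R)
    (g : ℝ → X) (hg0 : g 0 = x) (hg1 : g (dist x v₃) = v₃)
    (hgiso : ∀ s ∈ Set.Icc (0 : ℝ) (dist x v₃), ∀ t ∈ Set.Icc (0 : ℝ) (dist x v₃),
      dist (g s) (g t) = |s - t|)
    (γ₁ γ₂ γ₃ : Set X)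
    (hγ₁ : γ₁ = if R ≤ t₀ then f '' Set.Icc (0 : ℝ) (t₀ - R) else ∅)
    (hγ₂ : γ₂ = if R ≤ dist v₁ v₂ - t₀ then f '' Set.Icc (t₀ + R) (dist v₁ v₂) else ∅)
    (hγ₃ : γ₃ = if R ≤ dist x v₃ then g '' Set.Icc R (dist x v₃) else ∅) :
    ((R ≤ t₀ → R ≤ dist v₁ v₂ - t₀ →
        2 * R - 6 * δ ≤ dist (f (t₀ - R)) (f (t₀ + R))) ∧
     (R ≤ t₀ → R ≤ dist x v₃ →
        2 * R - 6 * δ ≤ dist (f (t₀ - R)) (g R)) ∧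
     (R ≤ dist v₁ v₂ - t₀ → R ≤ dist x v₃ →
        2 * R - 6 * δ ≤ dist (f (t₀ + R)) (g R))) ∧
    σ₁₂ ∪ σ₁₃ ∪ σ₂₃ ⊆
      Metric.closedBall x (R + δ) ∪ cnbhd δ γ₁ ∪ cnbhd δ γ₂ ∪ cnbhd δ γ₃ := by
  have hR0 : (0 : ℝ) < R := by linarith
  have hd12 : (0 : ℝ) ≤ dist v₁ v₂ := dist_nonneg
  have ht₀0 : (0 : ℝ) ≤ t₀ := ht₀.1
  have ht₀1 : t₀ ≤ dist v₁ v₂ := ht₀.2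
  have key : ∀ s t : ℝ, 0 ≤ s → s ≤ t → t ≤ dist v₁ v₂ → dist (f s) (f t) = t - s := by
    intro s t h1 h2 h3
    rw [hfiso s ⟨h1, by linarith⟩ t ⟨by linarith, h3⟩, abs_sub_comm,
      abs_of_nonneg (by linarith)]
  have keyg : ∀ s t : ℝ, 0 ≤ s → s ≤ t → t ≤ dist x v₃ → dist (g s) (g t) = t - s := by
    intro s t h1 h2 h3
    rw [hgiso s ⟨h1, by linarith⟩ t ⟨by linarith, h3⟩, abs_sub_comm,
      abs_of_nonneg (by linarith)]
  have hvx : dist v₁ x = t₀ := by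
    have h0 := key 0 t₀ le_rfl ht₀0 ht₀1
    rw [hf0, sub_zero, ← hx] at h0
    exact h0
  have hxv2 : dist x v₂ = dist v₁ v₂ - t₀ := by
    have h0 := key t₀ (dist v₁ v₂) ht₀0 ht₀1 le_rfl
    rw [hf1, ← hx] at h0
    exact h0
  constructor
  · refine ⟨?_, ?_, ?_⟩
    · intro h1 h2
      have := key (t₀ - R) (t₀ + R) (by linarith) (by linarith) (by linarith)
      linarith
    · intro h1 h2
      have hp : dist v₁ (f (t₀ - R)) = t₀ - R := by
        have h0 := key 0 (t₀ - R) le_rfl (by linarith) (by linarith)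
        rw [hf0, sub_zero] at h0
        exact h0
      have hq : dist (g R) v₃ = dist x v₃ - R := by
        have h0 := keyg R (dist x v₃) (by linarith) h2 le_rfl
        rw [hg1] at h0
        exact h0
      obtain ⟨z, hz, hxz⟩ := hx13
      obtain ⟨h, hh0, hh1, hhiso, hheq⟩ := hσ₁₃
      rw [hheq] at hz
      obtain ⟨u, hu, rfl⟩ := hz
      have hz1 : dist v₁ (h u) = u := by
        have h0 := hhiso 0 ⟨le_rfl, dist_nonneg⟩ u hu
        rw [hh0, abs_sub_comm, sub_zero, abs_of_nonneg hu.1] at h0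
        exact h0
      have hz2 : dist (h u) v₃ = dist v₁ v₃ - u := by
        have h0 := hhiso u hu (dist v₁ v₃) ⟨dist_nonneg, le_rfl⟩
        rw [hh1, abs_of_nonpos (by linarith [hu.2] : u - dist v₁ v₃ ≤ 0), neg_sub] at h0
        exact h0
      have t1 := dist_triangle v₁ (f (t₀ - R)) (g R)
      have t2 := dist_triangle v₁ (g R) v₃
      have t3 := dist_triangle v₁ (h u) x
      have t4 := dist_triangle x (h u) v₃
      have hc : dist (h u) x = dist x (h u) := dist_comm _ _
      linarith
    · intro h1 h2
      have hp : dist (f (t₀ + R)) v₂ = dist v₁ v₂ - (t₀ + R) := by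
        have h0 := key (t₀ + R) (dist v₁ v₂) (by linarith) (by linarith) le_rfl
        rw [hf1] at h0
        exact h0
      have hq : dist (g R) v₃ = dist x v₃ - R := by
        have h0 := keyg R (dist x v₃) (by linarith) h2 le_rfl
        rw [hg1] at h0
        exact h0
      obtain ⟨z, hz, hxz⟩ := hx23
      obtain ⟨h, hh0, hh1, hhiso, hheq⟩ := hσ₂₃
      rw [hheq] at hz
      obtain ⟨u, hu, rfl⟩ := hz
      have hz1 : dist v₂ (h u) = u := by
        have h0 := hhiso 0 ⟨le_rfl, dist_nonneg⟩ u hu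
        rw [hh0, abs_sub_comm, sub_zero, abs_of_nonneg hu.1] at h0
        exact h0
      have hz2 : dist (h u) v₃ = dist v₂ v₃ - u := by
        have h0 := hhiso u hu (dist v₂ v₃) ⟨dist_nonneg, le_rfl⟩
        rw [hh1, abs_of_nonpos (by linarith [hu.2] : u - dist v₂ v₃ ≤ 0), neg_sub] at h0
        exact h0
      have t1 := dist_triangle v₂ (f (t₀ + R)) (g R)
      have t2 := dist_triangle v₂ (g R) v₃
      have t3 := dist_triangle v₂ (h u) x
      have t4 := dist_triangle x (h u) v₃
      have hc : dist (h u) x = dist x (h u) := dist_comm _ _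
      have hc2 : dist v₂ (f (t₀ + R)) = dist (f (t₀ + R)) v₂ := dist_comm _ _
      have hc3 : dist v₂ x = dist x v₂ := dist_comm _ _
      linarith
  · -- part (b)
    have segB : IsGeodesicFrom (g '' Set.Icc 0 (dist x v₃)) x v₃ := ⟨g, hg0, hg1, hgiso, rfl⟩
    have segA : IsGeodesicFrom (f '' Set.Icc 0 t₀) v₁ x := by
      unfold IsGeodesicFrom
      rw [hvx]
      exact ⟨f, hf0, hx.symm,
        fun s hs t ht => hfiso s ⟨hs.1, hs.2.trans ht₀1⟩ t ⟨ht.1, ht.2.trans ht₀1⟩, rfl⟩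
    have segA2 : IsGeodesicFrom ((fun u => f (u + t₀)) '' Set.Icc 0 (dist v₁ v₂ - t₀)) x v₂ := by
      unfold IsGeodesicFrom
      rw [hxv2]
      refine ⟨fun u => f (u + t₀), ?_, ?_, ?_, rfl⟩
      · show f (0 + t₀) = x
        rw [zero_add, ← hx]
      · show f (dist v₁ v₂ - t₀ + t₀) = v₂
        have : dist v₁ v₂ - t₀ + t₀ = dist v₁ v₂ := by ring
        rw [this]; exact hf1
      · intro s hs t ht
        show dist (f (s + t₀)) (f (t + t₀)) = |s - t|
        rw [hfiso (s + t₀) ⟨by linarith [hs.1], by linarith [hs.2]⟩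
          (t + t₀) ⟨by linarith [ht.1], by linarith [ht.2]⟩]
        congr 1
        ring
    have slim13 := (slim v₁ x v₃ (f '' Set.Icc 0 t₀) (g '' Set.Icc 0 (dist x v₃)) σ₁₃
      segA segB hσ₁₃).2.2
    have slim23 := (slim x v₂ v₃ ((fun u => f (u + t₀)) '' Set.Icc 0 (dist v₁ v₂ - t₀)) σ₂₃
      (g '' Set.Icc 0 (dist x v₃)) segA2 hσ₂₃ segB).2.1
    intro y hy
    rcases hy with (hy | hy) | hy
    · -- y ∈ σ₁₂
      rw [hσ₁₂] at hy
      obtain ⟨s, hs, rfl⟩ := hy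
      rcases lt_or_ge s (t₀ - R) with hcase | hcase
      · have hRt : R ≤ t₀ := by linarith [hs.1]
        refine Or.inl (Or.inl (Or.inr ⟨f s, ?_, ?_⟩))
        · rw [hγ₁, if_pos hRt]
          exact ⟨s, ⟨hs.1, by linarith⟩, rfl⟩
        · rw [dist_self]; linarith
      rcases le_or_gt s (t₀ + R) with hcase2 | hcase2
      · refine Or.inl (Or.inl (Or.inl (Metric.mem_closedBall.2 ?_)))
        rw [hx, hfiso s hs t₀ ht₀]
        rw [abs_le] at *
        constructor <;> linarith
      · refine Or.inl (Or.inr ⟨f s, ?_, ?_⟩)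
        · rw [hγ₂, if_pos (by linarith [hs.2] : R ≤ dist v₁ v₂ - t₀)]
          exact ⟨s, ⟨by linarith, hs.2⟩, rfl⟩
        · rw [dist_self]; linarith
    · -- y ∈ σ₁₃
      obtain ⟨a, ha, hya⟩ := slim13 hy
      rcases ha with ha | ha
      · obtain ⟨s, hs, rfl⟩ := ha
        have hxa : dist (f s) x = t₀ - s := by
          rw [hx]; exact key s t₀ hs.1 hs.2 ht₀1
        rcases le_or_gt (t₀ - s) R with hcase | hcase
        · refine Or.inl (Or.inl (Or.inl (Metric.mem_closedBall.2 ?_)))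
          calc dist y x ≤ dist y (f s) + dist (f s) x := dist_triangle _ _ _
            _ ≤ R + δ := by rw [hxa]; linarith
        · have hRt : R ≤ t₀ := by linarith [hs.1]
          refine Or.inl (Or.inl (Or.inr ⟨f s, ?_, hya⟩))
          rw [hγ₁, if_pos hRt]
          exact ⟨s, ⟨hs.1, by linarith⟩, rfl⟩
      · obtain ⟨s, hs, rfl⟩ := ha
        have hxa : dist (g s) x = s := by
          have h0 := keyg 0 s le_rfl hs.1 hs.2
          rw [hg0, sub_zero, dist_comm] at h0
          exact h0
        rcases le_or_gt s R with hcase | hcase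
        · refine Or.inl (Or.inl (Or.inl (Metric.mem_closedBall.2 ?_)))
          calc dist y x ≤ dist y (g s) + dist (g s) x := dist_triangle _ _ _
            _ ≤ R + δ := by rw [hxa]; linarith
        · refine Or.inr ⟨g s, ?_, hya⟩
          rw [hγ₃, if_pos (hs.2.trans' hcase.le)]
          exact ⟨s, ⟨hcase.le, hs.2⟩, rfl⟩
    · -- y ∈ σ₂₃
      obtain ⟨a, ha, hya⟩ := slim23 hy
      rcases ha with ha | ha
      · obtain ⟨u, hu, rfl⟩ := ha
        have hxa : dist (f (u + t₀)) x = u := by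
          rw [hx, dist_comm]
          have := key t₀ (u + t₀) ht₀0 (by linarith [hu.1]) (by linarith [hu.2])
          rw [this]; ring
        rcases le_or_gt u R with hcase | hcase
        · refine Or.inl (Or.inl (Or.inl (Metric.mem_closedBall.2 ?_)))
          calc dist y x ≤ dist y (f (u + t₀)) + dist (f (u + t₀)) x := dist_triangle _ _ _
            _ ≤ R + δ := by rw [hxa]; linarith
        · refine Or.inl (Or.inr ⟨f (u + t₀), ?_, hya⟩)
          rw [hγ₂, if_pos (by linarith [hu.2] : R ≤ dist v₁ v₂ - t₀)]
          exact ⟨u + t₀, ⟨by linarith, by linarith [hu.2]⟩, rfl⟩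
      · obtain ⟨s, hs, rfl⟩ := ha
        have hxa : dist (g s) x = s := by
          have h0 := keyg 0 s le_rfl hs.1 hs.2
          rw [hg0, sub_zero, dist_comm] at h0
          exact h0
        rcases le_or_gt s R with hcase | hcase
        · refine Or.inl (Or.inl (Or.inl (Metric.mem_closedBall.2 ?_)))
          calc dist y x ≤ dist y (g s) + dist (g s) x := dist_triangle _ _ _
            _ ≤ R + δ := by rw [hxa]; linarith
        · refine Or.inr ⟨g s, ?_, hya⟩
          rw [hγ₃, if_pos (hs.2.trans' hcase.le)]
          exact ⟨s, ⟨hcase.le, hs.2⟩, rfl⟩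
end

section
/- Let Γ be a group and M a bounded Γ-module, and let E := (⋯ → E₁ → E₀ → M → 0) and E' := (⋯ → E'₁ → E'₀ → M → 0) be two b-projective resolutions of M. Then: (1) there exists a bounded chain Γ-map φ : E → E' extending the identity of M, i.e. bounded Γ-equivariant linear maps φ_k : E_k → E'_k commuting with the boundary maps and compatible with the augmentations to M; (2) any two such bounded chain Γ-maps φ, ψ extending id_M are boundedly Γ-homotopic: there exist bounded Γ-equivariant linear maps h_k : E_k → E'_{k+1} such that φ_k − ψ_k = ∂'_{k+1} ∘ h_k + h_{k−1} ∘ ∂_k for all k ≥ 0 (with h_{−1} = 0). -/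
/-- A bounded `Γ`-module: a normed real vector space with a linear `Γ`-action by uniformly
bounded operators. -/
structure BddModule (Γ : Type) [Group Γ] where
  V : Type
  [nacg : NormedAddCommGroup V]
  [nsp : NormedSpace ℝ V]
  ρ : Γ →* Module.End ℝ V
  bdd : ∃ L : ℝ, 0 < L ∧ ∀ (γ : Γ) (v : V), ‖ρ γ v‖ ≤ L * ‖v‖

attribute [instance] BddModule.nacg BddModule.nsp

/-- A linear map between normed spaces is undistorted if elements of its range admit
preimages of linearly controlled norm. -/
def Undistorted {V W : Type} [NormedAddCommGroup V] [NormedSpace ℝ V]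
    [NormedAddCommGroup W] [NormedSpace ℝ W] (f : V →ₗ[ℝ] W) : Prop :=
  ∃ K : ℝ, 0 < K ∧ ∀ w ∈ LinearMap.range f, ∃ v, f v = w ∧ ‖v‖ ≤ K * ‖w‖

variable {Γ : Type} [Group Γ]

/-- A bounded `Γ`-map between bounded `Γ`-modules: a bounded `Γ`-equivariant linear map. -/
def IsBddMap (A B : BddModule Γ) (f : A.V →ₗ[ℝ] B.V) : Prop :=
  (∃ C : ℝ, ∀ v : A.V, ‖f v‖ ≤ C * ‖v‖) ∧
  (∀ (γ : Γ) (v : A.V), f (A.ρ γ v) = B.ρ γ (f v))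

/-- A bounded `Γ`-module `P` is `b`-projective if every bounded `Γ`-map from `P` lifts along
any surjective undistorted bounded `Γ`-map. -/
def BProjective (P : BddModule Γ) : Prop :=
  ∀ (A B : BddModule Γ) (φ : A.V →ₗ[ℝ] B.V), IsBddMap A B φ → Undistorted φ →
    Function.Surjective φ → ∀ f : P.V →ₗ[ℝ] B.V, IsBddMap P B f →
      ∃ g : P.V →ₗ[ℝ] A.V, IsBddMap P A g ∧ φ.comp g = f

/-- A bounded `Γ`-resolution `⋯ → E₁ → E₀ → M → 0` of a bounded `Γ`-module `M`:
an exact complex of bounded `Γ`-modules and bounded `Γ`-maps. -/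
structure BddResolution (Γ : Type) [Group Γ] (M : BddModule Γ) where
  E : ℕ → BddModule Γ
  d : (k : ℕ) → (E (k + 1)).V →ₗ[ℝ] (E k).V
  ε : (E 0).V →ₗ[ℝ] M.V
  d_bdd : ∀ k, IsBddMap (E (k + 1)) (E k) (d k)
  ε_bdd : IsBddMap (E 0) M ε
  exact_at_M : Function.Surjective ε
  exact_at_zero : LinearMap.range (d 0) = LinearMap.ker ε
  exact_at_succ : ∀ k, LinearMap.range (d (k + 1)) = LinearMap.ker (d k)

/-- A `b`-projective resolution: all modules are `b`-projective and all maps undistorted. -/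
def IsBProjectiveResolution {M : BddModule Γ} (E : BddResolution Γ M) : Prop :=
  (∀ k, BProjective (E.E k)) ∧ (∀ k, Undistorted (E.d k)) ∧ Undistorted E.ε

/-- A bounded chain `Γ`-map between two resolutions of `M` extending the identity of `M`. -/
def IsBddChainMapExtendingId {M : BddModule Γ} (E E' : BddResolution Γ M)
    (φ : (k : ℕ) → (E.E k).V →ₗ[ℝ] (E'.E k).V) : Prop :=
  (∀ k, IsBddMap (E.E k) (E'.E k) (φ k)) ∧
  (∀ k, (φ k).comp (E.d k) = (E'.d k).comp (φ (k + 1))) ∧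
  E'.ε.comp (φ 0) = E.ε

/-! ### Auxiliary lemmas -/

lemma IsBddMap.comp' {A B C : BddModule Γ} {f : B.V →ₗ[ℝ] C.V} {g : A.V →ₗ[ℝ] B.V}
    (hf : IsBddMap B C f) (hg : IsBddMap A B g) : IsBddMap A C (f.comp g) := by
  obtain ⟨⟨Cf, hCf⟩, heqf⟩ := hf
  obtain ⟨⟨Cg, hCg⟩, heqg⟩ := hg
  refine ⟨⟨|Cf| * |Cg|, fun v => ?_⟩, fun γ v => by simp [heqg, heqf]⟩
  have h1 : ‖f (g v)‖ ≤ |Cf| * ‖g v‖ :=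
    (hCf (g v)).trans (mul_le_mul_of_nonneg_right (le_abs_self _) (norm_nonneg _))
  have h2 : ‖g v‖ ≤ |Cg| * ‖v‖ :=
    (hCg v).trans (mul_le_mul_of_nonneg_right (le_abs_self _) (norm_nonneg _))
  calc ‖(f.comp g) v‖ = ‖f (g v)‖ := rfl
    _ ≤ |Cf| * ‖g v‖ := h1
    _ ≤ |Cf| * (|Cg| * ‖v‖) := mul_le_mul_of_nonneg_left h2 (abs_nonneg _)
    _ = |Cf| * |Cg| * ‖v‖ := by ring

lemma IsBddMap.sub' {A B : BddModule Γ} {f g : A.V →ₗ[ℝ] B.V}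
    (hf : IsBddMap A B f) (hg : IsBddMap A B g) : IsBddMap A B (f - g) := by
  obtain ⟨⟨Cf, hCf⟩, heqf⟩ := hf
  obtain ⟨⟨Cg, hCg⟩, heqg⟩ := hg
  refine ⟨⟨|Cf| + |Cg|, fun v => ?_⟩, fun γ v => by simp [heqf, heqg]⟩
  have h1 : ‖f v‖ ≤ |Cf| * ‖v‖ :=
    (hCf v).trans (mul_le_mul_of_nonneg_right (le_abs_self _) (norm_nonneg _))
  have h2 : ‖g v‖ ≤ |Cg| * ‖v‖ :=
    (hCg v).trans (mul_le_mul_of_nonneg_right (le_abs_self _) (norm_nonneg _))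
  calc ‖(f - g) v‖ = ‖f v - g v‖ := rfl
    _ ≤ ‖f v‖ + ‖g v‖ := norm_sub_le _ _
    _ ≤ |Cf| * ‖v‖ + |Cg| * ‖v‖ := add_le_add h1 h2
    _ = (|Cf| + |Cg|) * ‖v‖ := by ring

/-- Restriction of a bounded module to an invariant submodule. -/
noncomputable def BddModule.restrictMod (B : BddModule Γ) (S : Submodule ℝ B.V)
    (hS : ∀ (γ : Γ), ∀ x ∈ S, B.ρ γ x ∈ S) : BddModule Γ where
  V := S
  ρ := { toFun := fun γ => (B.ρ γ).restrict (fun x hx => hS γ x hx),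
         map_one' := by ext x; simp [LinearMap.restrict_apply],
         map_mul' := fun γ δ => by ext x; simp [LinearMap.restrict_apply, Module.End.mul_apply] }
  bdd := by
    obtain ⟨L, hL, h⟩ := B.bdd
    exact ⟨L, hL, fun γ v => by simpa [LinearMap.restrict_apply] using h γ v.val⟩

/-- The key lifting lemma: a bounded `Γ`-map from a `b`-projective module whose range lies in
the range of an undistorted bounded `Γ`-map lifts. -/
lemma lift_into {P A B : BddModule Γ} (hP : BProjective P)
    (d : A.V →ₗ[ℝ] B.V) (hd : IsBddMap A B d) (hdu : Undistorted d)
    (f : P.V →ₗ[ℝ] B.V) (hf : IsBddMap P B f)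
    (hrange : LinearMap.range f ≤ LinearMap.range d) :
    ∃ g : P.V →ₗ[ℝ] A.V, IsBddMap P A g ∧ d.comp g = f := by
  set S := LinearMap.range d with hSdef
  have hSinv : ∀ (γ : Γ), ∀ x ∈ S, B.ρ γ x ∈ S := by
    rintro γ x ⟨a, rfl⟩
    exact ⟨A.ρ γ a, hd.2 γ a⟩
  let B' := B.restrictMod S hSinv
  let d' : A.V →ₗ[ℝ] B'.V := d.codRestrict S (fun a => LinearMap.mem_range_self d a)
  have hd' : IsBddMap A B' d' := by
    obtain ⟨⟨C, hC⟩, heq⟩ := hd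
    refine ⟨⟨C, fun v => ?_⟩, fun γ v => ?_⟩
    · exact hC v
    · apply Subtype.ext
      exact heq γ v
  have hd'u : Undistorted d' := by
    obtain ⟨K, hK, hspec⟩ := hdu
    refine ⟨K, hK, fun w _ => ?_⟩
    obtain ⟨v, hv, hn⟩ := hspec w.val w.2
    exact ⟨v, Subtype.ext hv, hn⟩
  have hd's : Function.Surjective d' := by
    rintro ⟨w, a, rfl⟩
    exact ⟨a, rfl⟩
  let f' : P.V →ₗ[ℝ] B'.V := f.codRestrict S (fun x => hrange (LinearMap.mem_range_self f x))
  have hf' : IsBddMap P B' f' := by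
    obtain ⟨⟨C, hC⟩, heq⟩ := hf
    refine ⟨⟨C, fun v => hC v⟩, fun γ v => ?_⟩
    apply Subtype.ext
    exact heq γ v
  obtain ⟨g, hg, hcomp⟩ := hP A B' d' hd' hd'u hd's f' hf'
  refine ⟨g, hg, ?_⟩
  ext x
  have h1 := congrArg Subtype.val (LinearMap.ext_iff.mp hcomp x)
  exact h1

/-- One step of the chain-map construction. -/
lemma chain_step {M : BddModule Γ} (E E' : BddResolution Γ M)
    (hE : IsBProjectiveResolution E) (hE' : IsBProjectiveResolution E')
    (k : ℕ) (f : (E.E k).V →ₗ[ℝ] (E'.E k).V)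
    (hf : IsBddMap (E.E k) (E'.E k) f)
    (hmem : ∀ x, f (E.d k x) ∈ LinearMap.range (E'.d k)) :
    ∃ g : (E.E (k+1)).V →ₗ[ℝ] (E'.E (k+1)).V,
      IsBddMap (E.E (k+1)) (E'.E (k+1)) g ∧ (E'.d k).comp g = f.comp (E.d k) := by
  apply lift_into (hE.1 (k+1)) (E'.d k) (E'.d_bdd k) (hE'.2.1 k)
    (f.comp (E.d k)) (hf.comp' (E.d_bdd k))
  rintro _ ⟨x, rfl⟩
  exact hmem x

/-- The recursively constructed chain map (with one look-ahead step). -/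
noncomputable def chainF {M : BddModule Γ} (E E' : BddResolution Γ M)
    (hE : IsBProjectiveResolution E) (hE' : IsBProjectiveResolution E')
    (f0 : (E.E 0).V →ₗ[ℝ] (E'.E 0).V)
    (hf0 : IsBddMap (E.E 0) (E'.E 0) f0) (hf0e : E'.ε.comp f0 = E.ε) :
    ∀ k : ℕ, Σ' (f : (E.E k).V →ₗ[ℝ] (E'.E k).V) (g : (E.E (k+1)).V →ₗ[ℝ] (E'.E (k+1)).V),
      IsBddMap (E.E k) (E'.E k) f ∧ IsBddMap (E.E (k+1)) (E'.E (k+1)) g ∧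
      (E'.d k).comp g = f.comp (E.d k)
  | 0 => by
    have hmem : ∀ x, f0 (E.d 0 x) ∈ LinearMap.range (E'.d 0) := by
      intro x
      rw [E'.exact_at_zero, LinearMap.mem_ker]
      have h1 : E'.ε (f0 (E.d 0 x)) = E.ε (E.d 0 x) := LinearMap.ext_iff.mp hf0e (E.d 0 x)
      have h2 : E.d 0 x ∈ LinearMap.ker E.ε := by
        rw [← E.exact_at_zero]; exact LinearMap.mem_range_self _ x
      rw [h1]; exact h2
    have hex := chain_step E E' hE hE' 0 f0 hf0 hmem
    exact ⟨f0, hex.choose, hf0, hex.choose_spec.1, hex.choose_spec.2⟩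
  | (k+1) => by
    obtain ⟨f, g, hf, hg, hcomp⟩ := chainF E E' hE hE' f0 hf0 hf0e k
    have hmem : ∀ x, g (E.d (k+1) x) ∈ LinearMap.range (E'.d (k+1)) := by
      intro x
      rw [E'.exact_at_succ, LinearMap.mem_ker]
      have h1 : (E'.d k) (g (E.d (k+1) x)) = f (E.d k (E.d (k+1) x)) :=
        LinearMap.ext_iff.mp hcomp (E.d (k+1) x)
      have h2 : E.d k (E.d (k+1) x) = 0 := by
        have hmem2 : E.d (k+1) x ∈ LinearMap.ker (E.d k) := by
          rw [← E.exact_at_succ]; exact LinearMap.mem_range_self _ x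
        exact hmem2
      rw [h1, h2, map_zero]
    have hex := chain_step E E' hE hE' (k+1) g hg hmem
    exact ⟨g, hex.choose, hg, hex.choose_spec.1, hex.choose_spec.2⟩

lemma chainF_succ_fst {M : BddModule Γ} (E E' : BddResolution Γ M)
    (hE : IsBProjectiveResolution E) (hE' : IsBProjectiveResolution E')
    (f0 : (E.E 0).V →ₗ[ℝ] (E'.E 0).V)
    (hf0 : IsBddMap (E.E 0) (E'.E 0) f0) (hf0e : E'.ε.comp f0 = E.ε) (k : ℕ) :
    (chainF E E' hE hE' f0 hf0 hf0e (k+1)).1 = (chainF E E' hE hE' f0 hf0 hf0e k).2.1 := by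
  rw [chainF]
  obtain ⟨f, g, hf, hg, hcomp⟩ := chainF E E' hE hE' f0 hf0 hf0e k
  rfl

lemma chainF_zero_fst {M : BddModule Γ} (E E' : BddResolution Γ M)
    (hE : IsBProjectiveResolution E) (hE' : IsBProjectiveResolution E')
    (f0 : (E.E 0).V →ₗ[ℝ] (E'.E 0).V)
    (hf0 : IsBddMap (E.E 0) (E'.E 0) f0) (hf0e : E'.ε.comp f0 = E.ε) :
    (chainF E E' hE hE' f0 hf0 hf0e 0).1 = f0 := by
  rw [chainF]

/-- One step of the homotopy construction. -/
lemma homotopy_step {M : BddModule Γ} (E E' : BddResolution Γ M)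
    (hE : IsBProjectiveResolution E) (hE' : IsBProjectiveResolution E')
    (k : ℕ) (u : (E.E (k+1)).V →ₗ[ℝ] (E'.E (k+1)).V)
    (hu : IsBddMap (E.E (k+1)) (E'.E (k+1)) u)
    (hmem : ∀ x, E'.d k (u x) = 0) :
    ∃ h : (E.E (k+1)).V →ₗ[ℝ] (E'.E (k+2)).V,
      IsBddMap (E.E (k+1)) (E'.E (k+2)) h ∧ (E'.d (k+1)).comp h = u := by
  apply lift_into (hE.1 (k+1)) (E'.d (k+1)) (E'.d_bdd (k+1)) (hE'.2.1 (k+1)) u hu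
  rintro _ ⟨x, rfl⟩
  rw [E'.exact_at_succ, LinearMap.mem_ker]
  exact hmem x

/-- The recursively constructed homotopy (with one look-ahead step). -/
noncomputable def homotopyG {M : BddModule Γ} (E E' : BddResolution Γ M)
    (hE : IsBProjectiveResolution E) (hE' : IsBProjectiveResolution E')
    (φ ψ : (k : ℕ) → (E.E k).V →ₗ[ℝ] (E'.E k).V)
    (hφ : IsBddChainMapExtendingId E E' φ) (hψ : IsBddChainMapExtendingId E E' ψ)
    (h0 : (E.E 0).V →ₗ[ℝ] (E'.E 1).V) (hh0 : IsBddMap (E.E 0) (E'.E 1) h0)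
    (hh0e : (E'.d 0).comp h0 = φ 0 - ψ 0) :
    ∀ k : ℕ, Σ' (h : (E.E k).V →ₗ[ℝ] (E'.E (k+1)).V)
        (h' : (E.E (k+1)).V →ₗ[ℝ] (E'.E (k+2)).V),
      IsBddMap (E.E k) (E'.E (k+1)) h ∧ IsBddMap (E.E (k+1)) (E'.E (k+2)) h' ∧
      φ (k+1) - ψ (k+1) = (E'.d (k+1)).comp h' + h.comp (E.d k)
  | 0 => by
    set u : (E.E 1).V →ₗ[ℝ] (E'.E 1).V := (φ 1 - ψ 1) - h0.comp (E.d 0) with hu_def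
    have hu : IsBddMap (E.E 1) (E'.E 1) u :=
      IsBddMap.sub' (IsBddMap.sub' (hφ.1 1) (hψ.1 1)) (hh0.comp' (E.d_bdd 0))
    have hmem : ∀ x, E'.d 0 (u x) = 0 := by
      intro x
      have hφc : φ 0 (E.d 0 x) = E'.d 0 (φ 1 x) := LinearMap.ext_iff.mp (hφ.2.1 0) x
      have hψc : ψ 0 (E.d 0 x) = E'.d 0 (ψ 1 x) := LinearMap.ext_iff.mp (hψ.2.1 0) x
      have hh : E'.d 0 (h0 (E.d 0 x)) = φ 0 (E.d 0 x) - ψ 0 (E.d 0 x) :=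
        LinearMap.ext_iff.mp hh0e (E.d 0 x)
      simp only [hu_def, LinearMap.sub_apply, LinearMap.comp_apply, map_sub, hh,
        ← hφc, ← hψc]
      abel
    have hex := homotopy_step E E' hE hE' 0 u hu hmem
    refine ⟨h0, hex.choose, hh0, hex.choose_spec.1, ?_⟩
    rw [hex.choose_spec.2, hu_def]
    abel
  | (k+1) => by
    obtain ⟨h, h', hh, hh', heq⟩ := homotopyG E E' hE hE' φ ψ hφ hψ h0 hh0 hh0e k
    set u : (E.E (k+2)).V →ₗ[ℝ] (E'.E (k+2)).V :=
      (φ (k+2) - ψ (k+2)) - h'.comp (E.d (k+1)) with hu_def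
    have hu : IsBddMap (E.E (k+2)) (E'.E (k+2)) u :=
      IsBddMap.sub' (IsBddMap.sub' (hφ.1 (k+2)) (hψ.1 (k+2))) (hh'.comp' (E.d_bdd (k+1)))
    have hmem : ∀ x, E'.d (k+1) (u x) = 0 := by
      intro x
      have hφc : φ (k+1) (E.d (k+1) x) = E'.d (k+1) (φ (k+2) x) :=
        LinearMap.ext_iff.mp (hφ.2.1 (k+1)) x
      have hψc : ψ (k+1) (E.d (k+1) x) = E'.d (k+1) (ψ (k+2) x) :=
        LinearMap.ext_iff.mp (hψ.2.1 (k+1)) x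
      have hd0 : E.d k (E.d (k+1) x) = 0 := by
        have hmem2 : E.d (k+1) x ∈ LinearMap.ker (E.d k) := by
          rw [← E.exact_at_succ]; exact LinearMap.mem_range_self _ x
        exact hmem2
      have hprev : φ (k+1) (E.d (k+1) x) - ψ (k+1) (E.d (k+1) x) =
          E'.d (k+1) (h' (E.d (k+1) x)) + h (E.d k (E.d (k+1) x)) := by
        have := LinearMap.ext_iff.mp heq (E.d (k+1) x)
        simpa using this
      rw [hd0, map_zero, add_zero] at hprev
      simp only [hu_def, LinearMap.sub_apply, LinearMap.comp_apply, map_sub,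
        ← hφc, ← hψc, hprev]
      abel
    have hex := homotopy_step E E' hE hE' (k+1) u hu hmem
    refine ⟨h', hex.choose, hh', hex.choose_spec.1, ?_⟩
    rw [hex.choose_spec.2, hu_def]
    abel

lemma homotopyG_succ_fst {M : BddModule Γ} (E E' : BddResolution Γ M)
    (hE : IsBProjectiveResolution E) (hE' : IsBProjectiveResolution E')
    (φ ψ : (k : ℕ) → (E.E k).V →ₗ[ℝ] (E'.E k).V)
    (hφ : IsBddChainMapExtendingId E E' φ) (hψ : IsBddChainMapExtendingId E E' ψ)
    (h0 : (E.E 0).V →ₗ[ℝ] (E'.E 1).V) (hh0 : IsBddMap (E.E 0) (E'.E 1) h0)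
    (hh0e : (E'.d 0).comp h0 = φ 0 - ψ 0) (k : ℕ) :
    (homotopyG E E' hE hE' φ ψ hφ hψ h0 hh0 hh0e (k+1)).1 =
      (homotopyG E E' hE hE' φ ψ hφ hψ h0 hh0 hh0e k).2.1 := by
  rw [homotopyG]
  obtain ⟨h, h', hh, hh', heq⟩ := homotopyG E E' hE hE' φ ψ hφ hψ h0 hh0 hh0e k
  rfl

lemma homotopyG_zero_fst {M : BddModule Γ} (E E' : BddResolution Γ M)
    (hE : IsBProjectiveResolution E) (hE' : IsBProjectiveResolution E')
    (φ ψ : (k : ℕ) → (E.E k).V →ₗ[ℝ] (E'.E k).V)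
    (hφ : IsBddChainMapExtendingId E E' φ) (hψ : IsBddChainMapExtendingId E E' ψ)
    (h0 : (E.E 0).V →ₗ[ℝ] (E'.E 1).V) (hh0 : IsBddMap (E.E 0) (E'.E 1) h0)
    (hh0e : (E'.d 0).comp h0 = φ 0 - ψ 0) :
    (homotopyG E E' hE hE' φ ψ hφ hψ h0 hh0 hh0e 0).1 = h0 := by
  rw [homotopyG]
/-- uniqueness of `b`-projective resolutions up to bounded homotopy:
between any two `b`-projective resolutions of a bounded `Γ`-module `M` there exists a bounded
chain `Γ`-map extending `id_M`, and any two such chain maps are boundedly `Γ`-homotopic. -/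
theorem bprojective_resolutions_comparison {M : BddModule Γ}
    (E E' : BddResolution Γ M)
    (hE : IsBProjectiveResolution E) (hE' : IsBProjectiveResolution E') :
    (∃ φ : (k : ℕ) → (E.E k).V →ₗ[ℝ] (E'.E k).V, IsBddChainMapExtendingId E E' φ) ∧
    (∀ φ ψ : (k : ℕ) → (E.E k).V →ₗ[ℝ] (E'.E k).V,
      IsBddChainMapExtendingId E E' φ → IsBddChainMapExtendingId E E' ψ →
      ∃ h : (k : ℕ) → (E.E k).V →ₗ[ℝ] (E'.E (k + 1)).V,
        (∀ k, IsBddMap (E.E k) (E'.E (k + 1)) (h k)) ∧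
        φ 0 - ψ 0 = (E'.d 0).comp (h 0) ∧
        (∀ k, φ (k + 1) - ψ (k + 1) =
          (E'.d (k + 1)).comp (h (k + 1)) + (h k).comp (E.d k))) := by
  constructor
  · -- Existence of a chain map extending the identity
    obtain ⟨f0, hf0, hf0e⟩ := hE.1 0 (E'.E 0) M E'.ε E'.ε_bdd hE'.2.2 E'.exact_at_M E.ε E.ε_bdd
    refine ⟨fun k => (chainF E E' hE hE' f0 hf0 hf0e k).1, fun k => (chainF E E' hE hE' f0 hf0 hf0e k).2.2.1, fun k => ?_, ?_⟩
    · beta_reduce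
      rw [chainF_succ_fst E E' hE hE' f0 hf0 hf0e k]
      exact ((chainF E E' hE hE' f0 hf0 hf0e k).2.2.2.2).symm
    · beta_reduce
      rw [chainF_zero_fst E E' hE hE' f0 hf0 hf0e]
      exact hf0e
  · -- Uniqueness up to bounded homotopy
    intro φ ψ hφ hψ
    have hrange : LinearMap.range (φ 0 - ψ 0) ≤ LinearMap.range (E'.d 0) := by
      rintro _ ⟨x, rfl⟩
      rw [E'.exact_at_zero, LinearMap.mem_ker]
      have h1 : E'.ε (φ 0 x) = E.ε x := LinearMap.ext_iff.mp hφ.2.2 x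
      have h2 : E'.ε (ψ 0 x) = E.ε x := LinearMap.ext_iff.mp hψ.2.2 x
      simp [h1, h2]
    obtain ⟨h0, hh0, hh0e⟩ := lift_into (hE.1 0) (E'.d 0) (E'.d_bdd 0) (hE'.2.1 0)
      (φ 0 - ψ 0) (IsBddMap.sub' (hφ.1 0) (hψ.1 0)) hrange
    refine ⟨fun k => (homotopyG E E' hE hE' φ ψ hφ hψ h0 hh0 hh0e k).1,
      fun k => (homotopyG E E' hE hE' φ ψ hφ hψ h0 hh0 hh0e k).2.2.1, ?_, fun k => ?_⟩
    · beta_reduce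
      rw [homotopyG_zero_fst E E' hE hE' φ ψ hφ hψ h0 hh0 hh0e]
      exact hh0e.symm
    · beta_reduce
      rw [homotopyG_succ_fst E E' hE hE' φ ψ hφ hψ h0 hh0 hh0e k]
      exact (homotopyG E E' hE hE' φ ψ hφ hψ h0 hh0 hh0e k).2.2.2.2
end
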